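/- arXiv:2501.17571 — 5 statements merged into one kernel-verified Lean document; each statement's English description precedes it below -/
import Mathlib

section
/- Let n ≥ 8, and let μ be a partition of n containing k ≥ 2 distinct parts 1 < d₁ < d₂ < ... < d_k (each greater than 1). Let λ be a partition of n with λ₁ ≥ λ₁' (where λ₁' is the number of parts of λ). Then one of the following holds: (i) k = 2 and there exists an integer m with λ = (m,1^{m-1}), d₁ = m-1, d₂ = m; (ii) n - λ₁' - d₁ ≥ k - 1 and exactly one part of μ equals d₁; (iii) n - λ₁' - d₁ ≥ k. -/
/-- `l` is a partition of `n`: a weakly decreasing list of positive integers with sum `n`. -/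
def IsPartitionOf (n : ℕ) (l : List ℕ) : Prop :=
  l.Pairwise (· ≥ ·) ∧ (∀ x ∈ l, 0 < x) ∧ l.sum = n

/-- Remove the corner box lying at the end of the last row whose length is at least `b`
(used with `b` a part of `l`: this removes a box from the last row of length `b`). -/
def removeCornerAt (l : List ℕ) (b : ℕ) : List ℕ :=
  (l.set (l.countP (fun x => decide (b ≤ x)) - 1) (b - 1)).filter (fun x => decide (0 < x))

/-- Remove the first corner: the corner lying in a longest row. -/
def removeFirstCorner (l : List ℕ) : List ℕ := removeCornerAt l (l.headD 0)

/-- The second largest distinct part of `l`. -/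
def secondVal (l : List ℕ) : ℕ := (l.filter (fun x => decide (x < l.headD 0))).headD 0

/-- Remove the second corner: the corner lying in a row whose length is the
second largest among the row lengths. -/
def removeSecondCorner (l : List ℕ) : List ℕ := removeCornerAt l (secondVal l)

/-- The conjugate (transpose) partition. -/
def conjugatePartition (l : List ℕ) : List ℕ :=
  (List.range (l.headD 0)).map (fun j => l.countP (fun x => decide (j < x)))

/-- Value of the permutation character of `S_n` acting on colorings of `Fin n`
with fiber sizes given by the composition `mu` (the character induced from the
trivial character of the Young subgroup `S_{mu}`). -/
noncomputable def youngPermChar {n : ℕ} (mu : List ℕ) (σ : Equiv.Perm (Fin n)) : ℤ :=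
  (Set.ncard {f : Fin n → ℕ |
    (∀ i, f (σ i) = f i) ∧ ∀ j : ℕ, Set.ncard {i : Fin n | f i = j} = mu.getD j 0} : ℤ)

/-- The irreducible character `χ^λ` of `S_n` associated with the partition `lam`,
defined by the Jacobi–Trudi determinant `χ^λ = det(h_{λ_i - i + j})`, expanded
as a signed sum over permutations of Young-subgroup permutation characters. -/
noncomputable def chiLambda {n : ℕ} (lam : List ℕ) (σ : Equiv.Perm (Fin n)) : ℤ :=
  ∑ w : Equiv.Perm (Fin lam.length),
    if ∀ i : Fin lam.length, (i : ℕ) ≤ lam.getD i 0 + (w i : ℕ) then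
      ((Equiv.Perm.sign w : ℤ)) *
        youngPermChar ((List.finRange lam.length).map
          (fun (i : Fin lam.length) => lam.getD (i : ℕ) 0 + ((w i : ℕ)) - (i : ℕ))) σ
    else 0

/-- The cycle type of a permutation including fixed points as cycles of length 1. -/
def fullCycleType {n : ℕ} (σ : Equiv.Perm (Fin n)) : Multiset ℕ :=
  σ.cycleType + Multiset.replicate (n - σ.support.card) 1

open Polynomial

lemma aux_replicate (t : List ℕ) (h : ∀ x ∈ t, 0 < x) (hs : t.sum ≤ t.length) :
    t = List.replicate t.length 1 := by
  induction t with
  | nil => simp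
  | cons a t ih =>
    have ha : 0 < a := h a (by simp)
    have ht : t.length ≤ t.sum :=
      List.length_le_sum_of_one_le t (fun x hx => h x (by simp [hx]))
    simp only [List.sum_cons, List.length_cons] at hs ⊢
    have ha1 : a = 1 := by omega
    subst ha1
    rw [List.replicate_succ]
    exact congrArg _ (ih (fun x hx => h x (by simp [hx])) (by omega))


theorem stmt0 (n k : ℕ) (hn : 8 ≤ n) (hk : 2 ≤ k)
    (μ lam : List ℕ) (d : Fin k → ℕ)
    (hμ : IsPartitionOf n μ)
    (hdmono : StrictMono d) (hdgt : ∀ i, 1 < d i)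
    (hdparts : ∀ x : ℕ, (x ∈ μ ∧ 1 < x) ↔ ∃ i, d i = x)
    (hlam : IsPartitionOf n lam)
    (hcol : lam.length ≤ lam.headD 0) :
    (k = 2 ∧ ∃ m : ℕ, lam = m :: List.replicate (m - 1) 1 ∧
      d ⟨0, by omega⟩ = m - 1 ∧ d ⟨1, by omega⟩ = m) ∨
    (((k : ℤ) - 1 ≤ (n : ℤ) - lam.length - d ⟨0, by omega⟩) ∧
      μ.count (d ⟨0, by omega⟩) = 1) ∨
    ((k : ℤ) ≤ (n : ℤ) - lam.length - d ⟨0, by omega⟩) := by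
  obtain ⟨k', rfl⟩ : ∃ k', k = k' + 2 := ⟨k - 2, by omega⟩
  have e0 : (⟨0, by omega⟩ : Fin (k'+2)) = 0 := rfl
  have e1 : (⟨1, by omega⟩ : Fin (k'+2)) = 1 := rfl
  rw [e0, e1]
  obtain ⟨hμsort, hμpos, hμsum⟩ := hμ
  obtain ⟨hlsort, hlpos, hlsum⟩ := hlam
  -- facts about d
  have hd0 : 2 ≤ d 0 := hdgt 0
  have hdge' : ∀ j (hj : j < k'+2), d 0 + j ≤ d ⟨j, hj⟩ := by
    intro j
    induction j with
    | zero => intro hj; simp [show (⟨0, hj⟩ : Fin (k'+2)) = 0 from rfl]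
    | succ j ih =>
      intro hj
      have h1 : d ⟨j, by omega⟩ < d ⟨j+1, hj⟩ := hdmono (by simp [Fin.lt_def])
      have h2 := ih (by omega)
      omega
  have hdge : ∀ i : Fin (k'+2), d 0 + i.val ≤ d i := by
    intro i
    have := hdge' i.val i.isLt
    simpa [Fin.eta] using this
  have hd1 : d 0 + 1 ≤ d 1 := hdge 1
  have hdmem : ∀ i, d i ∈ μ := fun i => ((hdparts (d i)).mpr ⟨i, rfl⟩).1
  have hcount : ∀ i : Fin (k'+2), 1 ≤ μ.count (d i) :=
    fun i => List.one_le_count_iff.mpr (hdmem i)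
  -- multiset bounds
  have hmsum : ((μ : Multiset ℕ)).sum = n := by simpa using hμsum
  have hSle : ∑ i, d i ≤ n := by
    have hle : (Multiset.map d Finset.univ.val) ≤ (μ : Multiset ℕ) := by
      rw [Multiset.le_iff_count]
      intro x
      by_cases hx : ∃ i, d i = x
      · obtain ⟨i, rfl⟩ := hx
        rw [Multiset.count_map_eq_count' d _ hdmono.injective]
        simpa using hcount i
      · rw [Multiset.count_eq_zero_of_notMem (by
          simp only [Multiset.mem_map]; rintro ⟨i, -, rfl⟩; exact hx ⟨i, rfl⟩)]
        exact Nat.zero_le _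
    obtain ⟨u, hu⟩ := Multiset.le_iff_exists_add.mp hle
    have : (Multiset.map d Finset.univ.val).sum ≤ ((μ : Multiset ℕ)).sum := by
      rw [hu]; simp
    calc ∑ i, d i = (Multiset.map d Finset.univ.val).sum := rfl
      _ ≤ n := by omega
  have hSle2 : 2 ≤ μ.count (d 0) → d 0 + ∑ i, d i ≤ n := by
    intro h2
    have hle : ((d 0) ::ₘ Multiset.map d Finset.univ.val) ≤ (μ : Multiset ℕ) := by
      rw [Multiset.le_iff_count]
      intro x
      rw [Multiset.count_cons]
      by_cases hx0 : x = d 0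
      · subst hx0
        rw [Multiset.count_map_eq_count' d _ hdmono.injective]
        simp only [if_pos rfl]
        simpa using h2
      · rw [if_neg hx0]
        by_cases hx : ∃ i, d i = x
        · obtain ⟨i, rfl⟩ := hx
          rw [Multiset.count_map_eq_count' d _ hdmono.injective]
          simpa using hcount i
        · rw [Multiset.count_eq_zero_of_notMem (by
            simp only [Multiset.mem_map]; rintro ⟨i, -, rfl⟩; exact hx ⟨i, rfl⟩)]
          simp
    obtain ⟨u, hu⟩ := Multiset.le_iff_exists_add.mp hle
    have : ((d 0) ::ₘ Multiset.map d Finset.univ.val).sum ≤ ((μ : Multiset ℕ)).sum := by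
      rw [hu]; simp
    simp only [Multiset.sum_cons] at this
    calc d 0 + ∑ i, d i = d 0 + (Multiset.map d Finset.univ.val).sum := rfl
      _ ≤ n := by omega
  -- lower bound on the sum
  have hSsum : d 0 + d 1 + 4 * k' ≤ ∑ i, d i := by
    rw [Fin.sum_univ_succ, Fin.sum_univ_succ]
    have hsucc : (0 : Fin (k'+1)).succ = (1 : Fin (k'+2)) := rfl
    rw [hsucc]
    have h4 : 4 * k' ≤ ∑ i : Fin k', d i.succ.succ := by
      calc 4 * k' = ∑ _i : Fin k', 4 := by simp [Finset.sum_const, mul_comm]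
        _ ≤ _ := Finset.sum_le_sum (fun i _ => by
            have := hdge i.succ.succ
            simp only [Fin.val_succ] at this
            omega)
    omega
  -- lam facts
  obtain ⟨m, t, rfl⟩ : ∃ m t, lam = m :: t := by
    cases lam with
    | nil => simp at hlsum; omega
    | cons a t => exact ⟨a, t, rfl⟩
  simp only [List.headD_cons, List.length_cons] at hcol ⊢
  have hlen : t.length ≤ t.sum :=
    List.length_le_sum_of_one_le t (fun x hx => hlpos x (by simp [hx]))
  have hsum : m + t.sum = n := by simpa using hlsum
  -- case split on the multiplicity of d 0
  by_cases hc1 : μ.count (d 0) = 1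
  · -- count is 1
    by_cases hii : t.length + d 0 + k' + 2 ≤ n
    · refine Or.inr (Or.inl ⟨?_, hc1⟩)
      push_cast
      omega
    · -- exceptional case (i)
      have hkey : k' = 0 ∧ m = d 0 + 1 ∧ t.sum = t.length ∧ d 1 = d 0 + 1 := by
        omega
      obtain ⟨hk0, hm, hts, hd1'⟩ := hkey
      refine Or.inl ⟨by omega, m, ?_, by omega, by omega⟩
      have ht : t = List.replicate t.length 1 :=
        aux_replicate t (fun x hx => hlpos x (by simp [hx])) (by omega)
      have : t.length = m - 1 := by omega
      rw [ht, this]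
  · have hc2 : 2 ≤ μ.count (d 0) := by
      have := hcount 0; omega
    refine Or.inr (Or.inr ?_)
    have := hSle2 hc2
    push_cast
    omega
end

section
/- Let n ≥ 12 and suppose there exist k ≥ 2 distinct integers 1 < d₁ < d₂ < ... < d_k whose sum is at most n. Let λ be a partition of n with λ₁ ≥ λ₁' ≥ 2, and let μ be the partition of m := n - d₁ obtained from λ by removing the first corner (the corner in a longest row) d₁ times successively. If n - λ₁ ≥ k, then m - μ₁ ≥ k. -/
open Polynomial

namespace AuxP

def g (h : ℕ) (l : List ℕ) : ℕ := (l.map (fun x => x - h)).sum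

@[simp] lemma g_nil (h : ℕ) : g h [] = 0 := rfl
@[simp] lemma g_cons (h x : ℕ) (t : List ℕ) : g h (x :: t) = (x - h) + g h t := rfl
@[simp] lemma g_append (h : ℕ) (l₁ l₂ : List ℕ) : g h (l₁ ++ l₂) = g h l₁ + g h l₂ := by
  simp [g]

lemma g_le_sum (h : ℕ) (l : List ℕ) : g h l ≤ l.sum := by
  induction l with
  | nil => simp
  | cons x t ih => simp only [g_cons, List.sum_cons]; omega

lemma g_eq_zero (h : ℕ) (l : List ℕ) (hl : ∀ x ∈ l, x ≤ h) : g h l = 0 := by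
  induction l with
  | nil => rfl
  | cons x t ih =>
    have hx := hl x (by simp)
    have := ih (fun y hy => hl y (by simp [hy]))
    simp only [g_cons]
    omega

lemma g_replicate (h m a : ℕ) : g h (List.replicate m a) = m * (a - h) := by
  induction m with
  | zero => simp [g]
  | succ m ih => rw [List.replicate_succ]; simp only [g_cons, ih]; ring

lemma struct (a : ℕ) : ∀ (l : List ℕ), l.Pairwise (· ≥ ·) → (∀ y ∈ l, y ≤ a) →
    ∃ s, l = List.replicate (l.countP (fun x => decide (a ≤ x))) a ++ s ∧ ∀ y ∈ s, y < a := by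
  intro l
  induction l with
  | nil => intro _ _; exact ⟨[], by simp, by simp⟩
  | cons x t ih =>
    intro hs hle
    rw [List.pairwise_cons] at hs
    by_cases hax : a ≤ x
    · have hxa : x = a := le_antisymm (hle x (by simp)) hax
      obtain ⟨s, htr, hslt⟩ := ih hs.2 (fun y hy => hle y (by simp [hy]))
      refine ⟨s, ?_, hslt⟩
      rw [List.countP_cons_of_pos (p := fun x => decide (a ≤ x)) (by simpa using hax), List.replicate_succ]
      simp [hxa, ← htr]
    · have hxlt : x < a := by omega
      have hzero : (x::t).countP (fun x => decide (a ≤ x)) = 0 := by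
        rw [List.countP_eq_zero]
        intro y hy
        simp only [decide_eq_true_eq, not_le]
        rcases List.mem_cons.mp hy with rfl | hy
        · exact hxlt
        · exact lt_of_le_of_lt (hs.1 y hy) hxlt
      exact ⟨x::t, by simp [hzero], fun y hy => by
        rcases List.mem_cons.mp hy with rfl | hy
        · exact hxlt
        · exact lt_of_le_of_lt (hs.1 y hy) hxlt⟩

lemma set_rep (m a v x : ℕ) (s : List ℕ) :
    (List.replicate m a ++ x :: s).set m v = List.replicate m a ++ v :: s := by
  induction m with
  | zero => simp
  | succ m ih => rw [List.replicate_succ]; simp [ih]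

lemma g_filter (h : ℕ) (l : List ℕ) :
    g h (l.filter (fun x => decide (0 < x))) = g h l := by
  induction l with
  | nil => rfl
  | cons x t ih =>
    by_cases hx : 0 < x
    · rw [List.filter_cons_of_pos (by simpa using hx)]; simp [ih]
    · rw [List.filter_cons_of_neg (by simpa using hx)]; simp only [g_cons, ih]; omega

lemma pairwise_rep (m a : ℕ) : (List.replicate m a).Pairwise (· ≥ ·) := by
  induction m with
  | zero => simp
  | succ m ih =>
    rw [List.replicate_succ, List.pairwise_cons]
    exact ⟨fun y hy => le_of_eq (List.eq_of_mem_replicate hy), ih⟩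

lemma step_main (l : List ℕ) (hs : l.Pairwise (· ≥ ·)) (hp : ∀ x ∈ l, 0 < x) :
    (removeFirstCorner l).Pairwise (· ≥ ·) ∧ (∀ x ∈ removeFirstCorner l, 0 < x) ∧
      ∀ h, g h (removeFirstCorner l) = g h l - 1 := by
  cases l with
  | nil =>
    refine ⟨by simp [removeFirstCorner, removeCornerAt], by simp [removeFirstCorner, removeCornerAt], fun h => by simp [removeFirstCorner, removeCornerAt]⟩
  | cons x t =>
    have hpx : 0 < x := hp x (by simp)
    have hle : ∀ y ∈ x :: t, y ≤ x := by
      intro y hy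
      rcases List.mem_cons.mp hy with rfl | hy
      · exact le_refl _
      · exact (List.pairwise_cons.mp hs).1 y hy
    obtain ⟨s, hl, hslt⟩ := struct x (x::t) hs hle
    have hc1 : 1 ≤ (x::t).countP (fun y => decide (x ≤ y)) := by
      rw [List.countP_cons_of_pos (p := fun y => decide (x ≤ y)) (by simp)]; omega
    obtain ⟨m, hm⟩ : ∃ m, (x::t).countP (fun y => decide (x ≤ y)) = m + 1 :=
      ⟨(x::t).countP (fun y => decide (x ≤ y)) - 1, by omega⟩
    rw [hm, List.replicate_succ'] at hl
    have hl' : x :: t = List.replicate m x ++ x :: s := by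
      rw [hl]; simp
    have hr : removeFirstCorner (x :: t) =
        (List.replicate m x ++ (x-1) :: s).filter (fun y => decide (0 < y)) := by
      rw [removeFirstCorner, removeCornerAt]
      show ((x::t).set ((x::t).countP (fun y => decide (x ≤ y)) - 1) (x - 1)).filter _ = _
      rw [hm, Nat.add_sub_cancel, hl', set_rep]
    have hs' : (List.replicate m x ++ (x-1) :: s).Pairwise (· ≥ ·) := by
      rw [List.pairwise_append]
      refine ⟨pairwise_rep m x, ?_, ?_⟩
      · rw [List.pairwise_cons]
        refine ⟨fun y hy => by have := hslt y hy; omega, ?_⟩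
        have : s.Sublist (x :: t) := by
          rw [hl']
          exact List.Sublist.trans (List.sublist_cons_self x s) (List.sublist_append_right _ _)
        exact hs.sublist this
      · intro u hu v hv
        have hux := List.eq_of_mem_replicate hu
        rcases List.mem_cons.mp hv with rfl | hv
        · omega
        · have := hslt v hv; omega
    refine ⟨by rw [hr]; exact hs'.filter _, ?_, ?_⟩
    · intro y hy
      rw [hr, List.mem_filter] at hy
      simpa using hy.2
    · intro h
      rw [hr, g_filter]
      have e1 : g h (List.replicate m x ++ (x-1) :: s) = m * (x - h) + ((x-1) - h) + g h s := by
        simp [g_replicate]; ring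
      have e2 : g h (x :: t) = m * (x - h) + (x - h) + g h s := by
        rw [hl']; simp [g_replicate]; ring
      rw [e1, e2]
      by_cases hhx : h < x
      · have hgen : ∀ M S, M + ((x-1)-h) + S = M + (x-h) + S - 1 := by
          intro M S; omega
        exact hgen _ _
      · have hgs : g h s = 0 := g_eq_zero h s (fun y hy => by have := hslt y hy; omega)
        have hx0 : x - h = 0 := by omega
        have hx1 : x - 1 - h = 0 := by omega
        rw [hgs, hx0, hx1]
        simp

lemma iterate_main (D : ℕ) (l : List ℕ) (hs : l.Pairwise (· ≥ ·)) (hp : ∀ x ∈ l, 0 < x) :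
    (removeFirstCorner^[D] l).Pairwise (· ≥ ·) ∧ (∀ x ∈ removeFirstCorner^[D] l, 0 < x) ∧
      ∀ h, g h (removeFirstCorner^[D] l) = g h l - D := by
  induction D with
  | zero => exact ⟨hs, hp, fun h => by simp⟩
  | succ D ih =>
    obtain ⟨s1, p1, e1⟩ := ih
    rw [Function.iterate_succ_apply']
    obtain ⟨s2, p2, e2⟩ := step_main _ s1 p1
    exact ⟨s2, p2, fun h => by rw [e2 h, e1 h]; omega⟩

end AuxP


lemma arith3 (n k D : ℕ) (hn : 12 ≤ n) (hk3 : 3 ≤ k)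
    (hbig : 2*k*D + k*k ≤ 2*n + k) (hk2 : k*k + 3*k ≤ 2*n)
    (hDbig : n + 1 ≤ D + 2*k) : False := by
  have P1 : 2*(k:ℤ)*D + k*k ≤ 2*n + k := by exact_mod_cast hbig
  have P2 : (n:ℤ) + 1 ≤ D + 2*k := by exact_mod_cast hDbig
  have P3 : (k:ℤ)*k + 3*k ≤ 2*n := by exact_mod_cast hk2
  have P4 : (12:ℤ) ≤ n := by exact_mod_cast hn
  have P5 : (3:ℤ) ≤ k := by exact_mod_cast hk3
  have hKD : 2*(k:ℤ)*(n+1) ≤ 2*k*(D+2*k) :=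
    mul_le_mul_of_nonneg_left P2 (by linarith)
  have hQ : 2*(k:ℤ)*n ≤ 2*n + 3*k*k - k := by nlinarith [P1, hKD]
  have hR : 4*(n:ℤ) + k*k*k + k*k - 6*k ≤ 2*k*n := by
    have h2 : (0:ℤ) ≤ k - 2 := by linarith
    nlinarith [mul_le_mul_of_nonneg_left P3 h2]
  have hS : 2*(n:ℤ) ≤ -(k*k*k) + 2*(k*k) + 5*k := by linarith
  have hT : (0:ℤ) ≤ (k:ℤ)*k*k - 2*(k*k) - 5*k + 6 := by
    have h3 : (0:ℤ) ≤ k - 3 := by linarith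
    have h4 : (0:ℤ) ≤ k*k + k - 2 := by nlinarith
    nlinarith [mul_nonneg h3 h4]
  linarith

theorem stmt1 (n k : ℕ) (hn : 12 ≤ n) (hk : 2 ≤ k)
    (d : Fin k → ℕ) (hdmono : StrictMono d) (hdgt : ∀ i, 1 < d i)
    (hsum : ∑ i, d i ≤ n)
    (lam : List ℕ) (hlam : IsPartitionOf n lam)
    (hcol : lam.length ≤ lam.headD 0) (hcol2 : 2 ≤ lam.length)
    (μ : List ℕ) (hμ : μ = removeFirstCorner^[d ⟨0, by omega⟩] lam)
    (ht : (k : ℤ) ≤ (n : ℤ) - lam.headD 0) :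
    (k : ℤ) ≤ ((n : ℤ) - d ⟨0, by omega⟩) - μ.headD 0 := by
  obtain ⟨hsort, hpos, hsumn⟩ := hlam
  have h0k : 0 < k := by omega
  show (k:ℤ) ≤ ((n:ℤ) - d ⟨0, h0k⟩) - μ.headD 0
  have hμ' : μ = removeFirstCorner^[d ⟨0, h0k⟩] lam := hμ
  generalize hD : d ⟨0, h0k⟩ = D at hμ' ⊢
  have hD2 : 2 ≤ D := hD ▸ hdgt _
  have key : ∀ m (hm : m < k), D + m ≤ d ⟨m, hm⟩ := by
    intro m
    induction m with
    | zero =>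
      intro hm
      simp only [Nat.add_zero]
      exact le_of_eq (by rw [← hD])
    | succ m ih =>
      intro hm
      have h1 : m < k := by omega
      have h2 := ih h1
      have hlt : d ⟨m, h1⟩ < d ⟨m+1, hm⟩ := hdmono (Fin.mk_lt_mk.mpr (by omega))
      omega
  have hsum1 : ∑ i : Fin k, (D + (i:ℕ)) ≤ n := by
    refine le_trans (Finset.sum_le_sum ?_) hsum
    intro i _
    have := key i.1 i.2
    simpa using this
  have e : ∑ i : Fin k, ((i:ℕ)) = ∑ i ∈ Finset.range k, i :=
    Fin.sum_univ_eq_sum_range (fun i => i) k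
  have hsum2 : k * D + (∑ i ∈ Finset.range k, i) ≤ n := by
    calc k * D + (∑ i ∈ Finset.range k, i) = ∑ i : Fin k, (D + (i:ℕ)) := by
          rw [Finset.sum_add_distrib, Finset.sum_const, Finset.card_univ,
            Fintype.card_fin, smul_eq_mul, e]
      _ ≤ n := hsum1
  have hgauss : (∑ i ∈ Finset.range k, i) * 2 = k * (k-1) := Finset.sum_range_id_mul_two k
  have hkk : k * (k-1) + k = k * k := by
    obtain ⟨m, rfl⟩ := Nat.exists_eq_add_of_le (show 1 ≤ k by omega)
    have h1m : 1 + m - 1 = m := by omega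
    rw [h1m]; ring
  have hbig : 2*k*D + k*k ≤ 2*n + k := by linarith [hsum2, hgauss, hkk]
  have h2k : k*2 ≤ k*D := Nat.mul_le_mul_left k hD2
  have hk2 : k*k + 3*k ≤ 2*n := by linarith [hbig, h2k]
  have hA : lam.headD 0 + k ≤ n := by
    have : (lam.headD 0 : ℤ) + k ≤ (n:ℤ) := by linarith
    exact_mod_cast this
  obtain ⟨μs, μp, μg⟩ := AuxP.iterate_main D lam hsort hpos
  rw [← hμ'] at μs μp μg
  have main : μ.headD 0 + k + D ≤ n := by
    rcases lam with _ | ⟨a, lam1⟩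
    · simp at hcol2
    rcases lam1 with _ | ⟨b, rest⟩
    · simp at hcol2
    have hab : b ≤ a := (List.pairwise_cons.mp hsort).1 b (by simp)
    have hrest : ∀ y ∈ rest, y ≤ b := (List.pairwise_cons.mp (List.pairwise_cons.mp hsort).2).1
    have hsum3 : a + (b + rest.sum) = n := by simpa using hsumn
    have hA' : a + k ≤ n := by simpa using hA
    rcases Nat.eq_zero_or_pos (μ.headD 0) with hH0 | hH1
    · rw [hH0]
      have hkD : k + D ≤ k * D := Nat.add_le_mul hk hD2
      have hkk2 : k ≤ k*k := Nat.le_mul_of_pos_left k (by omega)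
      linarith [hbig, hkD, hkk2]
    · rcases μ with _ | ⟨H0, t⟩
      · simp at hH1
      simp only [List.headD_cons] at hH1 ⊢
      obtain ⟨h, rfl⟩ : ∃ h, H0 = h + 1 := ⟨H0 - 1, by omega⟩
      have hgμ : 1 ≤ AuxP.g h ((h+1) :: t) := by
        simp only [AuxP.g_cons]; omega
      have hgl : D + 1 ≤ AuxP.g h (a :: b :: rest) := by
        have := μg h
        omega
      have hglam : AuxP.g h (a :: b :: rest) = (a - h) + ((b - h) + AuxP.g h rest) := by
        simp [AuxP.g_cons]
      by_cases hbh : b ≤ h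
      · have h0 : AuxP.g h rest = 0 :=
          AuxP.g_eq_zero h rest (fun y hy => le_trans (hrest y hy) hbh)
        omega
      · have hgr := AuxP.g_le_sum h rest
        by_contra hcon
        push_neg at hcon
        have hDbig : n + 1 ≤ D + 2*k := by omega
        rcases Nat.lt_or_ge k 3 with hk3 | hk3
        · obtain rfl : k = 2 := by omega
          norm_num at hbig
          omega
        · exact arith3 n k D hn hk3 hbig hk2 hDbig
  have hfin : ((μ.headD 0 + k + D : ℕ) : ℤ) ≤ (n:ℤ) := by exact_mod_cast main
  push_cast at hfin
  linarith
end

section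
/- Let n ≥ 13, and let λ and μ be partitions of n with λ₁ ≥ λ₁', where μ contains k ≥ 2 distinct parts 1 < d₁ < ... < d_k. Let m = n - d₁ and let α be the partition of m obtained from λ by removing the first corner d₁ - 1 times and then removing either the first or the second corner once. If k = 2, d₂ = m (i.e., the partition obtained from μ by deleting one part equal to d₁ is the single row (m)), and α ∈ {(m), (1^m), (m-1,1), (2,1^{m-2})}, then λ belongs to the explicit list {(n), (n-1,1), (n-2,2), (n-2,1,1), (m,1^{m-1}), (m+1,1^{m-2}), (m,1^{m-2}), (m,2,1^{m-3}), (m-1,1^{m-2}), (m-1,2,1^{m-3}), (m-1,3,1^{m-3}), (m-1,2,2,1^{m-4})}. -/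
open Polynomial

namespace StmtAux

open List

def Pt (l : List ℕ) : Prop := l.Pairwise (· ≥ ·) ∧ ∀ x ∈ l, 0 < x

def cc (i : ℕ) (l : List ℕ) : ℕ := l.countP (fun x => decide (i ≤ x))

lemma cc_nil (i : ℕ) : cc i [] = 0 := rfl

lemma cc_cons (i a : ℕ) (l : List ℕ) :
    cc i (a :: l) = (if i ≤ a then 1 else 0) + cc i l := by
  simp only [cc, countP_cons]
  by_cases h : i ≤ a <;> simp [h] <;> omega

lemma cc_append (i : ℕ) (l t : List ℕ) : cc i (l ++ t) = cc i l + cc i t := by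
  simp [cc, countP_append]

lemma cc_replicate (i k a : ℕ) : cc i (replicate k a) = if i ≤ a then k else 0 := by
  induction k with
  | zero => simp [cc]
  | succ k ih => rw [replicate_succ, cc_cons, ih]; split <;> omega

lemma cc_mono {i j : ℕ} (h : i ≤ j) (l : List ℕ) : cc j l ≤ cc i l := by
  apply countP_mono_left
  intro x _ hx
  simp only [decide_eq_true_eq] at *
  omega

lemma cc_one {l : List ℕ} (h : ∀ x ∈ l, 0 < x) : cc 1 l = l.length := by
  induction l with
  | nil => rfl
  | cons a t ih =>
    rw [cc_cons, ih (fun x hx => h x (mem_cons_of_mem a hx))]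
    have := h a mem_cons_self
    simp [Nat.one_le_iff_ne_zero.mpr (Nat.pos_iff_ne_zero.mp this)]
    omega

lemma mem_le_head {l : List ℕ} (h : l.Pairwise (· ≥ ·)) {x : ℕ} (hx : x ∈ l) :
    x ≤ l.headD 0 := by
  cases l with
  | nil => simp at hx
  | cons a t =>
    rcases mem_cons.mp hx with rfl | hx
    · simp
    · exact (pairwise_cons.mp h).1 x hx

lemma cc_eq_zero {l : List ℕ} (h : l.Pairwise (· ≥ ·)) {i : ℕ} (hi : l.headD 0 < i) :
    cc i l = 0 := by
  apply countP_eq_zero.mpr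
  intro x hx
  simp only [decide_eq_true_eq]
  have := mem_le_head h hx
  omega

lemma head_le_of_cc {l : List ℕ} (h : l.Pairwise (· ≥ ·)) {i : ℕ} (hc : 1 ≤ cc i l) :
    i ≤ l.headD 0 := by
  by_contra hlt
  rw [cc_eq_zero h (by omega)] at hc
  omega

lemma one_le_cc {l : List ℕ} (hne : l ≠ []) {i : ℕ} (hih : i ≤ l.headD 0) :
    1 ≤ cc i l := by
  cases l with
  | nil => exact absurd rfl hne
  | cons a t =>
    rw [cc_cons]
    simp only [headD_cons] at hih
    simp [hih]

lemma ne_nil_of_sum {l : List ℕ} (h : 0 < l.sum) : l ≠ [] := by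
  intro hl; subst hl; simp at h

/-- structure lemma -/
lemma struct {l : List ℕ} (h : Pt l) (hne : l ≠ []) :
    ∃ r t, 0 < r ∧ l = replicate r (l.headD 0) ++ t ∧ (∀ x ∈ t, x < l.headD 0) ∧ Pt t := by
  induction l with
  | nil => exact absurd rfl hne
  | cons a rest ih =>
    obtain ⟨hs, hp⟩ := h
    rw [pairwise_cons] at hs
    have hrest : Pt rest := ⟨hs.2, fun x hx => hp x (mem_cons_of_mem a hx)⟩
    by_cases hr : rest.headD 0 = a ∧ rest ≠ []
    · obtain ⟨r, t, hr0, heq, hlt, hpt⟩ := ih hrest hr.2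
      refine ⟨r + 1, t, by omega, ?_, ?_, hpt⟩
      · simp only [headD_cons]
        rw [replicate_succ, cons_append]
        congr 1
        rw [heq, hr.1]
      · intro x hx
        simp only [headD_cons]
        have := hlt x hx
        omega
    · refine ⟨1, rest, one_pos, by simp, ?_, hrest⟩
      intro x hx
      simp only [headD_cons]
      have hxa := hs.1 x hx
      rcases Nat.lt_or_ge x a with h1 | h1
      · exact h1
      · exfalso
        have hxa' : x = a := le_antisymm hxa h1
        have hne' : rest ≠ [] := ne_nil_of_mem hx
        have : rest.headD 0 = a := by
          have h1 := mem_le_head hs.2 hx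
          have h2 : rest.headD 0 ≤ a := by
            cases rest with
            | nil => exact absurd rfl hne'
            | cons b t => simpa using hs.1 b mem_cons_self
          omega
        exact hr ⟨this, hne'⟩

lemma set_replicate_append (r a v : ℕ) (t : List ℕ) (hr : 0 < r) :
    (replicate r a ++ t).set (r - 1) v = replicate (r - 1) a ++ v :: t := by
  obtain ⟨r', rfl⟩ : ∃ r', r = r' + 1 := ⟨r - 1, by omega⟩
  simp only [Nat.add_sub_cancel]
  rw [replicate_succ', append_assoc, set_append]
  simp [length_replicate]

lemma sorted_block {r a : ℕ} {t : List ℕ} (ht : t.Pairwise (· ≥ ·))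
    (hle : ∀ x ∈ t, x ≤ a) : (replicate r a ++ t).Pairwise (· ≥ ·) := by
  show (replicate r a ++ t).Pairwise (· ≥ ·)
  rw [pairwise_append]
  refine ⟨?_, ht, ?_⟩
  · rw [pairwise_replicate]; right; exact le_refl a
  · intro x hx y hy
    have := eq_of_mem_replicate hx
    subst this
    exact hle y hy

lemma filter_pos {l : List ℕ} (h : ∀ x ∈ l, 0 < x) :
    l.filter (fun x => decide (0 < x)) = l := by
  apply filter_eq_self.mpr
  intro x hx
  simp [h x hx]

def Tr (l b : List ℕ) : Prop :=
  b.headD 0 ≤ l.headD 0 ∧ (∀ i, 0 < i → i < b.headD 0 → cc i l = cc i b) ∧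
    (0 < b.headD 0 → cc (b.headD 0) b ≤ cc (b.headD 0) l)

lemma Tr_refl (l : List ℕ) : Tr l l := ⟨le_refl _, fun _ _ _ => rfl, fun _ => le_refl _⟩

lemma Tr_trans {l m b : List ℕ} (h1 : Tr l m) (h2 : Tr m b) : Tr l b := by
  obtain ⟨ha1, hb1, hc1⟩ := h1
  obtain ⟨ha2, hb2, hc2⟩ := h2
  refine ⟨le_trans ha2 ha1, ?_, ?_⟩
  · intro i hi hib
    rw [hb1 i hi (by omega), hb2 i hi hib]
  · intro hb0
    rcases Nat.lt_or_ge (b.headD 0) (m.headD 0) with h | h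
    · calc cc (b.headD 0) b ≤ cc (b.headD 0) m := hc2 hb0
        _ = cc (b.headD 0) l := (hb1 _ hb0 h).symm
    · have hbm : b.headD 0 = m.headD 0 := le_antisymm ha2 h
      calc cc (b.headD 0) b ≤ cc (b.headD 0) m := hc2 hb0
        _ ≤ cc (b.headD 0) l := by rw [hbm]; exact hc1 (by omega)


lemma headD_block {r a x : ℕ} {t : List ℕ} (hr : 0 < r) :
    (List.replicate r a ++ x :: t).headD 0 = a := by
  obtain ⟨k, rfl⟩ : ∃ k, r = k + 1 := ⟨r - 1, by omega⟩
  rw [replicate_succ]; simp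

lemma headD_replicate (k a : ℕ) :
    (List.replicate k a).headD 0 = if k = 0 then 0 else a := by
  cases k with
  | zero => simp
  | succ k => rw [replicate_succ]; simp

lemma R_repr {l : List ℕ} {a r : ℕ} {t : List ℕ}
    (ha : l.headD 0 = a) (hr : 0 < r) (heq : l = replicate r a ++ t)
    (hlt : ∀ x ∈ t, x < a) :
    removeFirstCorner l =
      (replicate (r - 1) a ++ (a - 1) :: t).filter (fun x => decide (0 < x)) := by
  have hcc : l.countP (fun x => decide (a ≤ x)) = r := by
    have h1 : cc a l = r := by
      rw [heq, cc_append, cc_replicate]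
      have : cc a t = 0 := by
        apply countP_eq_zero.mpr
        intro x hx
        simp only [decide_eq_true_eq]
        have := hlt x hx
        omega
      simp [this]
    exact h1
  unfold removeFirstCorner removeCornerAt
  rw [ha, hcc]
  congr 1
  rw [heq]
  exact set_replicate_append r a (a - 1) t hr

lemma step {l : List ℕ} (h : Pt l) (hne : l ≠ []) :
    Pt (removeFirstCorner l) ∧ (removeFirstCorner l).sum + 1 = l.sum ∧
      Tr l (removeFirstCorner l) := by
  obtain ⟨r, t, hr, heq, hlt, hpt⟩ := struct h hne
  obtain ⟨a, ha⟩ : ∃ a, l.headD 0 = a := ⟨_, rfl⟩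
  rw [ha] at heq hlt
  have hapos : 0 < a := by
    have : a ∈ l := by rw [heq]; exact mem_append_left _ (mem_replicate.mpr ⟨by omega, rfl⟩)
    exact h.2 a this
  have hRl := R_repr ha hr heq hlt
  have hccl : ∀ i, cc i l = (if i ≤ a then r else 0) + cc i t := by
    intro i; rw [heq, cc_append, cc_replicate]
  by_cases ha1 : a = 1
  · -- a = 1 : t = [], l = replicate r 1
    have ht : t = [] := by
      cases t with
      | nil => rfl
      | cons x s =>
        have h1 := hlt x mem_cons_self
        have h2 := hpt.2 x mem_cons_self
        omega
    subst ht
    subst ha1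
    have hRl' : removeFirstCorner l = replicate (r - 1) 1 := by
      rw [hRl, filter_append]
      rw [filter_pos (l := replicate (r-1) 1) (by intro x hx; rw [eq_of_mem_replicate hx]; omega)]
      simp
    have hsum : l.sum = r := by rw [heq]; simp [sum_replicate]
    have hh := headD_replicate (r-1) 1
    refine ⟨⟨?_, ?_⟩, ?_, ?_, ?_, ?_⟩
    · rw [hRl']
      exact (List.pairwise_replicate).mpr (Or.inr (le_refl 1))
    · rw [hRl']; intro x hx; rw [eq_of_mem_replicate hx]; omega
    · rw [hRl', hsum]; simp [sum_replicate]; omega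
    · rw [hRl', ha, hh]
      rcases eq_or_ne (r - 1) 0 with h0 | h0 <;> simp [h0]
    · intro i hi hib
      exfalso
      rw [hRl', hh] at hib
      rcases eq_or_ne (r - 1) 0 with h0 | h0
      · rw [if_pos h0] at hib; omega
      · rw [if_neg h0] at hib; omega
    · intro hpos
      rw [hRl', hh] at hpos ⊢
      have hr2 : ¬ (r - 1 = 0) := by
        intro hc; rw [hc] at hpos; simp at hpos
      rw [if_neg hr2] at hpos ⊢
      rw [cc_replicate, hccl 1, cc_nil]
      simp
  · -- a ≥ 2
    have ha2 : 2 ≤ a := by omega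
    have hβ : removeFirstCorner l = replicate (r - 1) a ++ (a - 1) :: t := by
      rw [hRl]
      apply filter_pos
      intro x hx
      rcases mem_append.mp hx with hx | hx
      · rw [eq_of_mem_replicate hx]; omega
      · rcases mem_cons.mp hx with rfl | hx
        · omega
        · exact hpt.2 x hx
    have hccβ : ∀ i, cc i (removeFirstCorner l) =
        (if i ≤ a then r - 1 else 0) + (if i ≤ a - 1 then 1 else 0) + cc i t := by
      intro i
      rw [hβ, cc_append, cc_replicate, cc_cons]
      omega
    have hheadβ : (removeFirstCorner l).headD 0 = if r = 1 then a - 1 else a := by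
      rw [hβ]
      rcases Nat.eq_or_lt_of_le hr with h1 | h1
      · rw [if_pos h1.symm, ← h1]; simp
      · rw [if_neg (by omega)]
        exact headD_block (by omega)
    have hsorted : Pt (removeFirstCorner l) := by
      constructor
      · rw [hβ]
        apply sorted_block
        · rw [pairwise_cons]
          exact ⟨fun x hx => by have := hlt x hx; omega, hpt.1⟩
        · intro x hx
          rcases mem_cons.mp hx with rfl | hx
          · omega
          · have := hlt x hx; omega
      · rw [hβ]
        intro x hx
        rcases mem_append.mp hx with hx | hx
        · rw [eq_of_mem_replicate hx]; omega
        · rcases mem_cons.mp hx with rfl | hx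
          · omega
          · exact hpt.2 x hx
    have hsum : (removeFirstCorner l).sum + 1 = l.sum := by
      rw [hβ, heq]
      obtain ⟨k, rfl⟩ : ∃ k, r = k + 1 := ⟨r - 1, by omega⟩
      simp [sum_append, sum_replicate, smul_eq_mul, Nat.succ_mul]
      omega
    by_cases hr1 : r = 1
    · have hB : (removeFirstCorner l).headD 0 = a - 1 := by rw [hheadβ, if_pos hr1]
      refine ⟨hsorted, hsum, ?_, ?_, ?_⟩
      · rw [hB, ha]; omega
      · intro i hi hib
        rw [hB] at hib
        rw [hccl, hccβ]
        simp only [if_pos (show i ≤ a - 1 by omega), if_pos (show i ≤ a by omega)]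
        omega
      · intro _
        rw [hB, hccl, hccβ]
        simp only [if_pos (show a - 1 ≤ a - 1 by omega), if_pos (show a - 1 ≤ a by omega)]
        omega
    · have hB : (removeFirstCorner l).headD 0 = a := by rw [hheadβ, if_neg hr1]
      refine ⟨hsorted, hsum, ?_, ?_, ?_⟩
      · rw [hB, ha]
      · intro i hi hib
        rw [hB] at hib
        rw [hccl, hccβ]
        simp only [if_pos (show i ≤ a - 1 by omega), if_pos (show i ≤ a by omega)]
        omega
      · intro _
        rw [hB, hccl, hccβ]
        simp only [if_pos (le_refl a), if_neg (show ¬ a ≤ a - 1 by omega)]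
        omega


lemma iterR {l : List ℕ} (h : Pt l) (s : ℕ) (hs : s ≤ l.sum) :
    Pt (removeFirstCorner^[s] l) ∧ (removeFirstCorner^[s] l).sum + s = l.sum ∧
      Tr l (removeFirstCorner^[s] l) := by
  induction s with
  | zero => exact ⟨h, by simp, Tr_refl l⟩
  | succ s ih =>
    obtain ⟨hP, hsum, hTr⟩ := ih (by omega)
    have hne : removeFirstCorner^[s] l ≠ [] := by
      intro hc
      rw [hc] at hsum; simp at hsum; omega
    obtain ⟨hP', hsum', hTr'⟩ := step hP hne
    rw [Function.iterate_succ_apply']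
    exact ⟨hP', by omega, Tr_trans hTr hTr'⟩

lemma ind_sum (a M : ℕ) (h : a ≤ M) :
    ∑ i ∈ Finset.Ioc 0 M, (if i ≤ a then (1:ℕ) else 0) = a := by
  induction M with
  | zero => simp; omega
  | succ M ih =>
    rw [← Finset.Icc_add_one_left_eq_Ioc] at *
    rw [Finset.sum_Icc_succ_top (by omega)]
    rcases Nat.lt_or_ge M a with h1 | h1
    · have ha : a = M + 1 := by omega
      subst ha
      rw [if_pos (le_refl _)]
      have : ∑ i ∈ Finset.Icc 1 M, (if i ≤ M + 1 then (1:ℕ) else 0)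
          = ∑ i ∈ Finset.Icc 1 M, 1 := by
        apply Finset.sum_congr rfl
        intro x hx
        simp only [Finset.mem_Icc] at hx
        rw [if_pos (by omega)]
      rw [zero_add, this]
      simp
    · rw [ih h1, if_neg (by omega)]; omega

lemma sum_eq_cc {l : List ℕ} (h : Pt l) {M : ℕ} (hM : l.headD 0 ≤ M) :
    l.sum = ∑ i ∈ Finset.Ioc 0 M, cc i l := by
  induction l generalizing M with
  | nil => simp [cc_nil]
  | cons a t ih =>
    have hs := pairwise_cons.mp h.1
    have hPt : Pt t := ⟨hs.2, fun x hx => h.2 x (mem_cons_of_mem a hx)⟩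
    have hht : t.headD 0 ≤ a := by
      cases t with
      | nil => simp
      | cons b u => exact hs.1 b mem_cons_self
    have hhM : t.headD 0 ≤ M := le_trans hht (by simpa using hM)
    rw [sum_cons, ih hPt hhM]
    have : ∀ i, cc i (a :: t) = (if i ≤ a then 1 else 0) + cc i t := fun i => cc_cons i a t
    rw [Finset.sum_congr rfl (fun i _ => this i), Finset.sum_add_distrib,
      ind_sum a M (by simpa using hM)]

lemma sum_split {l : List ℕ} (h : Pt l) (hne : l ≠ []) {k : ℕ}
    (hk : k ≤ l.headD 0) :
    l.sum = (∑ i ∈ Finset.Ioc 0 k, cc i l) + ∑ i ∈ Finset.Ioc k (l.headD 0), cc i l := by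
  have hd : Disjoint (Finset.Ioc 0 k) (Finset.Ioc k (l.headD 0)) := by
    rw [Finset.disjoint_left]
    intro x hx hy
    simp only [Finset.mem_Ioc] at hx hy
    omega
  rw [sum_eq_cc h (le_refl _), ← Finset.sum_union hd,
    Finset.Ioc_union_Ioc_eq_Ioc (Nat.zero_le k) hk]

lemma tail_lower {l : List ℕ} (h : Pt l) (hne : l ≠ []) {k : ℕ} (hk : k ≤ l.headD 0) :
    l.headD 0 - k ≤ ∑ i ∈ Finset.Ioc k (l.headD 0), cc i l := by
  have := Finset.card_nsmul_le_sum (Finset.Ioc k (l.headD 0)) (fun i => cc i l) 1 ?_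
  · simpa [Nat.card_Ioc] using this
  · intro x hx
    simp only [Finset.mem_Ioc] at hx
    exact one_le_cc hne hx.2

lemma tail_exact {l : List ℕ} (h : Pt l) (hne : l ≠ []) {k : ℕ} (hk : k ≤ l.headD 0)
    (h1 : cc (k+1) l ≤ 1) :
    ∑ i ∈ Finset.Ioc k (l.headD 0), cc i l = l.headD 0 - k := by
  have : ∀ i ∈ Finset.Ioc k (l.headD 0), cc i l = 1 := by
    intro i hi
    simp only [Finset.mem_Ioc] at hi
    have hle : cc i l ≤ 1 := le_trans (cc_mono (by omega) l) h1
    have hge : 1 ≤ cc i l := one_le_cc hne hi.2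
    omega
  rw [Finset.sum_congr rfl this]
  simp [Nat.card_Ioc]

lemma cc_ext : ∀ {l l' : List ℕ}, Pt l → Pt l' → (∀ i, 1 ≤ i → cc i l = cc i l') → l = l' := by
  intro l
  induction l with
  | nil =>
    intro l' _ h' hcc
    have := hcc 1 (le_refl 1)
    rw [cc_nil, cc_one h'.2] at this
    exact (length_eq_zero_iff.mp this.symm).symm
  | cons a t ih =>
    intro l' h h' hcc
    have hne' : l' ≠ [] := by
      intro hc; subst hc
      have := hcc 1 (le_refl 1)
      rw [cc_one h.2, cc_nil] at this
      simp at this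
    cases l' with
    | nil => exact absurd rfl hne'
    | cons a' t' =>
      have hs := pairwise_cons.mp h.1
      have hs' := pairwise_cons.mp h'.1
      have hPt : Pt t := ⟨hs.2, fun x hx => h.2 x (mem_cons_of_mem a hx)⟩
      have hPt' : Pt t' := ⟨hs'.2, fun x hx => h'.2 x (mem_cons_of_mem a' hx)⟩
      have hapos : 0 < a := h.2 a mem_cons_self
      have hapos' : 0 < a' := h'.2 a' mem_cons_self
      have haa : a = a' := by
        have h1 : 1 ≤ cc a (a :: t) := one_le_cc (by simp) (by simp)
        have h2 : 1 ≤ cc a' (a' :: t') := one_le_cc (by simp) (by simp)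
        rw [hcc a hapos] at h1
        rw [← hcc a' hapos'] at h2
        have := head_le_of_cc h'.1 h1
        have := head_le_of_cc h.1 h2
        simp at *
        omega
      subst haa
      have : t = t' := by
        apply ih hPt hPt'
        intro i hi
        have := hcc i hi
        rw [cc_cons, cc_cons] at this
        omega
      rw [this]

lemma sorted_shape3 (p q r L : ℕ) (hL : 4 ≤ L) :
    Pt (L :: (replicate p 3 ++ replicate q 2 ++ replicate r 1)) := by
  constructor
  · rw [pairwise_cons]
    constructor
    · intro x hx
      simp only [mem_append, mem_replicate] at hx
      rcases hx with (hx | hx) | hx <;> omega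
    · rw [append_assoc]
      apply sorted_block
      · apply sorted_block
        · exact (List.pairwise_replicate).mpr (Or.inr (le_refl 1))
        · intro x hx; rw [eq_of_mem_replicate hx]; omega
      · intro x hx
        simp only [mem_append, mem_replicate] at hx
        rcases hx with hx | hx <;> omega
  · intro x hx
    simp only [mem_cons, mem_append, mem_replicate] at hx
    rcases hx with rfl | ((hx | hx) | hx) <;> omega

lemma rec_shape {l : List ℕ} (h : Pt l) {L g1 g2 g3 : ℕ}
    (hL : l.headD 0 = L) (hL4 : 4 ≤ L)
    (h1 : cc 1 l = g1) (h2 : cc 2 l = g2) (h3 : cc 3 l = g3) (h4 : cc 4 l ≤ 1)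
    (hg2 : g2 ≤ g1) (hg3 : g3 ≤ g2) (hg31 : 1 ≤ g3) :
    l = L :: (replicate (g3 - 1) 3 ++ replicate (g2 - g3) 2 ++ replicate (g1 - g2) 1) := by
  have hne : l ≠ [] := by
    intro hc; subst hc; simp at hL; omega
  apply cc_ext h (sorted_shape3 _ _ _ _ hL4)
  intro i hi
  have hcand : ∀ j, cc j (L :: (replicate (g3 - 1) 3 ++ replicate (g2 - g3) 2
      ++ replicate (g1 - g2) 1)) =
      (if j ≤ L then 1 else 0) + ((if j ≤ 3 then g3 - 1 else 0)
        + (if j ≤ 2 then g2 - g3 else 0) + (if j ≤ 1 then g1 - g2 else 0)) := by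
    intro j
    rw [cc_cons, cc_append, cc_append, cc_replicate, cc_replicate, cc_replicate]
  rw [hcand]
  rcases Nat.lt_or_ge L i with hiL | hiL
  · -- i > L : both zero
    rw [cc_eq_zero h.1 (by omega)]
    split_ifs <;> omega
  · rcases Nat.lt_or_ge i 4 with hi4 | hi4
    · -- i ∈ {1,2,3}
      interval_cases i
      · rw [h1]; split_ifs <;> omega
      · rw [h2]; split_ifs <;> omega
      · rw [h3]; split_ifs <;> omega
    · -- 4 ≤ i ≤ L
      have hle : cc i l ≤ 1 := le_trans (cc_mono hi4 l) h4
      have hge : 1 ≤ cc i l := one_le_cc hne (by omega)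
      have : cc i l = 1 := by omega
      rw [this]
      split_ifs <;> omega


lemma set_deep (r a q b v : ℕ) (u : List ℕ) (hq : 0 < q) :
    (replicate r a ++ (replicate q b ++ u)).set (r + q - 1) v =
      replicate r a ++ (replicate (q - 1) b ++ v :: u) := by
  rw [set_append]
  rw [if_neg (by simp [length_replicate]; omega)]
  congr 1
  have : r + q - 1 - (replicate r a).length = q - 1 := by simp [length_replicate]; omega
  rw [this]
  exact set_replicate_append q b v u hq

lemma stepS {l : List ℕ} (h : Pt l) (hne : l ≠ []) :
    (∃ k a, 0 < k ∧ 0 < a ∧ l = replicate k a ∧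
      removeSecondCorner l = replicate (k-1) a) ∨
    (∃ b, 0 < b ∧ b < l.headD 0 ∧ ∀ i, 1 ≤ i →
       cc i (removeSecondCorner l) + (if i = b then 1 else 0) = cc i l) := by
  obtain ⟨r, t, hr, heq, hlt, hpt⟩ := struct h hne
  obtain ⟨a, ha⟩ : ∃ a, l.headD 0 = a := ⟨_, rfl⟩
  rw [ha] at heq hlt
  have hapos : 0 < a := by
    have : a ∈ l := by rw [heq]; exact mem_append_left _ (mem_replicate.mpr ⟨by omega, rfl⟩)
    exact h.2 a this
  have hfilt : l.filter (fun x => decide (x < l.headD 0)) = t := by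
    rw [ha]
    conv_lhs => rw [heq]
    rw [filter_append]
    rw [filter_eq_nil_iff.mpr (by intro x hx; rw [eq_of_mem_replicate hx]; simp)]
    rw [filter_eq_self.mpr (by intro x hx; simp [hlt x hx])]
    simp
  have hsv : secondVal l = t.headD 0 := by rw [secondVal, hfilt]
  cases t with
  | nil =>
    -- constant case
    left
    refine ⟨r, a, hr, hapos, by simpa using heq, ?_⟩
    have hsv0 : secondVal l = 0 := by rw [hsv]; rfl
    rw [removeSecondCorner, hsv0, removeCornerAt]
    have hcount : l.countP (fun x => decide (0 ≤ x)) = r := by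
      have : l.countP (fun x => decide (0 ≤ x)) = l.length := by
        apply countP_eq_length.mpr
        intro x _
        simp
      rw [this, heq]
      simp
    rw [hcount]
    have : l.set (r - 1) (0 - 1) = replicate (r-1) a ++ [0] := by
      conv_lhs => rw [heq]
      have := set_replicate_append r a 0 [] hr
      simpa using this
    rw [this, filter_append]
    rw [filter_pos (l := replicate (r-1) a)
      (by intro x hx; rw [eq_of_mem_replicate hx]; omega)]
    simp
  | cons b t' =>
    right
    have hbt : (b :: t').headD 0 = b := rfl
    have hbpos : 0 < b := hpt.2 b mem_cons_self
    have hba : b < a := hlt b mem_cons_self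
    obtain ⟨q, u, hq, heqt, hltu, hpu⟩ := struct hpt (by simp)
    rw [hbt] at heqt hltu
    refine ⟨b, hbpos, by omega, ?_⟩
    have hsvb : secondVal l = b := by rw [hsv, hbt]
    have hl2 : l = replicate r a ++ (replicate q b ++ u) := by rw [heq, heqt]
    have hccl : ∀ i, cc i l = (if i ≤ a then r else 0) + ((if i ≤ b then q else 0) + cc i u) := by
      intro i
      rw [hl2, cc_append, cc_append, cc_replicate, cc_replicate]
    have hcount : l.countP (fun x => decide (b ≤ x)) = r + q := by
      have h1 : cc b l = r + q := by
        rw [hccl b]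
        have : cc b u = 0 := by
          apply countP_eq_zero.mpr
          intro x hx
          simp only [decide_eq_true_eq]
          have := hltu x hx
          omega
        rw [this, if_pos (by omega), if_pos (le_refl b)]
        omega
      exact h1
    have hset : l.set (r + q - 1) (b - 1) = replicate r a ++ (replicate (q-1) b ++ (b-1) :: u) := by
      conv_lhs => rw [hl2]
      exact set_deep r a q b (b-1) u hq
    rw [removeSecondCorner, hsvb, removeCornerAt, hcount, hset]
    by_cases hb1 : b = 1
    · -- b = 1 : u = []
      have hu : u = [] := by
        cases u with
        | nil => rfl
        | cons x v =>
          have h1 := hltu x mem_cons_self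
          have h2 := hpu.2 x mem_cons_self
          omega
      subst hu
      subst hb1
      rw [filter_append, filter_pos (l := replicate r a)
        (by intro x hx; rw [eq_of_mem_replicate hx]; omega)]
      rw [filter_append, filter_pos (l := replicate (q-1) 1)
        (by intro x hx; rw [eq_of_mem_replicate hx]; omega)]
      simp only [Nat.sub_self]
      intro i hi
      rw [cc_append, cc_append, cc_replicate, cc_replicate, hccl]
      have : cc i [] = 0 := rfl
      simp only [filter_cons, this]
      norm_num
      split_ifs <;> omega
    · -- b ≥ 2
      have hfilt2 : (replicate r a ++ (replicate (q-1) b ++ (b-1) :: u)).filter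
          (fun x => decide (0 < x)) = replicate r a ++ (replicate (q-1) b ++ (b-1) :: u) := by
        apply filter_pos
        intro x hx
        rcases mem_append.mp hx with hx | hx
        · rw [eq_of_mem_replicate hx]; omega
        · rcases mem_append.mp hx with hx | hx
          · rw [eq_of_mem_replicate hx]; omega
          · rcases mem_cons.mp hx with rfl | hx
            · omega
            · exact hpu.2 x hx
      rw [hfilt2]
      intro i hi
      rw [cc_append, cc_append, cc_cons, cc_replicate, cc_replicate, hccl]
      split_ifs <;> omega


lemma Ioc01 (f : ℕ → ℕ) : ∑ i ∈ Finset.Ioc 0 1, f i = f 1 := by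
  have h : Finset.Ioc 0 1 = {1} := rfl
  rw [h, Finset.sum_singleton]

lemma Ioc02 (f : ℕ → ℕ) : ∑ i ∈ Finset.Ioc 0 2, f i = f 1 + f 2 := by
  have h : Finset.Ioc 0 2 = {1, 2} := rfl
  rw [h, Finset.sum_insert (by decide), Finset.sum_singleton]

lemma Ioc03 (f : ℕ → ℕ) : ∑ i ∈ Finset.Ioc 0 3, f i = f 1 + f 2 + f 3 := by
  have h : Finset.Ioc 0 3 = {1, 2, 3} := rfl
  rw [h, Finset.sum_insert (by decide), Finset.sum_insert (by decide), Finset.sum_singleton]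
  ring

lemma Ioc04 (f : ℕ → ℕ) : ∑ i ∈ Finset.Ioc 0 4, f i = f 1 + f 2 + f 3 + f 4 := by
  have h : Finset.Ioc 0 4 = {1, 2, 3, 4} := rfl
  rw [h, Finset.sum_insert (by decide), Finset.sum_insert (by decide),
    Finset.sum_insert (by decide), Finset.sum_singleton]
  ring

lemma sum_ge {lam : List ℕ} (h : Pt lam) (hne : lam ≠ []) {k : ℕ} (hk : k ≤ lam.headD 0) :
    (∑ i ∈ Finset.Ioc 0 k, cc i lam) + (lam.headD 0 - k) ≤ lam.sum := by
  rw [sum_split h hne hk]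
  have := tail_lower h hne hk
  omega

lemma sum_eqk {lam : List ℕ} (h : Pt lam) (hne : lam ≠ []) {k : ℕ} (hk : k ≤ lam.headD 0)
    (h1 : cc (k+1) lam ≤ 1) :
    lam.sum = (∑ i ∈ Finset.Ioc 0 k, cc i lam) + (lam.headD 0 - k) := by
  rw [sum_split h hne hk, tail_exact h hne hk h1]

lemma shape {lam : List ℕ} (h : Pt lam) {g1 g2 g3 : ℕ}
    (h1 : cc 1 lam = g1) (h2 : cc 2 lam = g2) (h3 : cc 3 lam = g3) (h4 : cc 4 lam ≤ 1)
    (hg31 : 1 ≤ g3) (hL4 : 4 ≤ lam.headD 0) :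
    lam.headD 0 = lam.sum - (g1 + g2 + g3) + 3 ∧
    lam = (lam.sum - (g1 + g2 + g3) + 3) :: (replicate (g3 - 1) 3 ++ replicate (g2 - g3) 2
      ++ replicate (g1 - g2) 1) := by
  have hne : lam ≠ [] := by intro hc; rw [hc] at hL4; simp at hL4
  have h3L : 3 ≤ lam.headD 0 := by omega
  have hsum := sum_eqk h hne h3L h4
  rw [Ioc03, h1, h2, h3] at hsum
  have hL : lam.headD 0 = lam.sum - (g1 + g2 + g3) + 3 := by omega
  refine ⟨hL, ?_⟩
  have hg21 : g2 ≤ g1 := by rw [← h1, ← h2]; exact cc_mono (by omega) lam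
  have hg32 : g3 ≤ g2 := by rw [← h2, ← h3]; exact cc_mono (by omega) lam
  have := rec_shape h (L := lam.headD 0) rfl hL4 h1 h2 h3 h4 hg21 hg32 hg31
  rw [← hL]
  exact this

lemma tall_false {lam : List ℕ} {n d1 : ℕ} (h : Pt lam) (hsum : lam.sum = n)
    (hn : 13 ≤ n) (hd1m : d1 < n - d1)
    (hcol : cc 1 lam ≤ lam.headD 0) (hg1 : n - d1 + 1 ≤ cc 1 lam) : False := by
  have hne : lam ≠ [] := ne_nil_of_sum (by omega)
  have h1L : 1 ≤ lam.headD 0 := by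
    have := head_le_of_cc h.1 (show 1 ≤ cc 1 lam by omega)
    omega
  have hb := sum_ge h hne h1L
  rw [Ioc01] at hb
  omega

lemma tall {lam : List ℕ} {n d1 : ℕ} (h : Pt lam) (hsum : lam.sum = n)
    (hn : 13 ≤ n) (hd1 : 1 < d1) (hd1m : d1 < n - d1)
    (hcol : cc 1 lam ≤ lam.headD 0) (hg1 : n - d1 ≤ cc 1 lam) :
    lam = (n - d1) :: replicate (n - d1 - 1) 1 := by
  have hne : lam ≠ [] := ne_nil_of_sum (by omega)
  have hm7 : 7 ≤ n - d1 := by omega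
  have h1L : 1 ≤ lam.headD 0 := by
    have := head_le_of_cc h.1 (show 1 ≤ cc 1 lam by omega)
    omega
  have hb := sum_ge h hne h1L
  rw [Ioc01] at hb
  -- cc 1 lam = n - d1, headD = n - d1
  have hg1e : cc 1 lam = n - d1 := by omega
  have hLe : lam.headD 0 = n - d1 := by omega
  have hg2 : cc 2 lam ≤ 1 := by
    by_contra hc
    have hb2 := sum_ge h hne (show 2 ≤ lam.headD 0 by omega)
    rw [Ioc02] at hb2
    omega
  have hg2e : cc 2 lam = 1 := by
    have := one_le_cc hne (show 2 ≤ lam.headD 0 by omega)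
    omega
  have hg3e : cc 3 lam = 1 := by
    have h1 := one_le_cc hne (show 3 ≤ lam.headD 0 by omega)
    have h2 := cc_mono (show 2 ≤ 3 by omega) lam
    omega
  have hg4 : cc 4 lam ≤ 1 := by
    have := cc_mono (show 2 ≤ 4 by omega) lam
    omega
  obtain ⟨hL, hsh⟩ := shape h hg1e hg2e hg3e hg4 (le_refl 1) (by omega)
  rw [hsh, hsum, show n - (n - d1 + 1 + 1) + 3 = n - d1 by omega]
  simp


lemma caseA4 {lam : List ℕ} {n d1 : ℕ} (h : Pt lam) (hsum : lam.sum = n)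
    (hn : 13 ≤ n) (hd1 : 1 < d1) (hd1m : d1 < n - d1)
    (hcol : cc 1 lam ≤ lam.headD 0) (hg1 : cc 1 lam = n - d1 - 1) :
    lam ∈ [[n], [n - 1, 1], [n - 2, 2], [n - 2, 1, 1],
           (n - d1) :: replicate (n - d1 - 1) 1,
           (n - d1 + 1) :: replicate (n - d1 - 2) 1,
           (n - d1) :: replicate (n - d1 - 2) 1,
           (n - d1) :: 2 :: replicate (n - d1 - 3) 1,
           (n - d1 - 1) :: replicate (n - d1 - 2) 1,
           (n - d1 - 1) :: 2 :: replicate (n - d1 - 3) 1,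
           (n - d1 - 1) :: 3 :: replicate (n - d1 - 3) 1,
           (n - d1 - 1) :: 2 :: 2 :: replicate (n - d1 - 4) 1] := by
  have hm7 : 7 ≤ n - d1 := by omega
  have hne : lam ≠ [] := ne_nil_of_sum (by omega)
  have hLm : n - d1 - 1 ≤ lam.headD 0 := by rw [← hg1]; exact hcol
  have hL4 : 4 ≤ lam.headD 0 := by omega
  have hg4 : cc 4 lam ≤ 1 := by
    by_contra hc
    push_neg at hc
    have hb := sum_ge h hne hL4
    rw [Ioc04] at hb
    have m2 := cc_mono (show 2 ≤ 4 by omega) lam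
    have m3 := cc_mono (show 3 ≤ 4 by omega) lam
    omega
  have hg2le : cc 2 lam ≤ 3 := by
    by_contra hc
    push_neg at hc
    have hb := sum_ge h hne (show 2 ≤ lam.headD 0 by omega)
    rw [Ioc02] at hb
    omega
  have hg3ge : 1 ≤ cc 3 lam := one_le_cc hne (by omega)
  have hg32 : cc 3 lam ≤ cc 2 lam := cc_mono (by omega) lam
  rcases (show cc 2 lam = 1 ∨ cc 2 lam = 2 ∨ cc 2 lam = 3 by omega) with h2 | h2 | h2
  · -- cc2 = 1, cc3 = 1 : lam = (d1+2) :: 1^(m-2)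
    have h3 : cc 3 lam = 1 := by omega
    obtain ⟨hL, hsh⟩ := shape h hg1 h2 h3 hg4 (by omega) hL4
    rw [hsum] at hL hsh
    rw [show n - (n - d1 - 1 + 1 + 1) + 3 = d1 + 2 by omega] at hL hsh
    rw [hsh]
    simp only [show (1:ℕ) - 1 = 0 from rfl, replicate_zero, nil_append, append_nil]
    rw [show n - d1 - 1 - 1 = n - d1 - 2 by omega]
    rw [hL] at hLm
    rcases (show d1 + 2 = n - d1 - 1 ∨ d1 + 2 = n - d1 ∨ d1 + 2 = n - d1 + 1 by omega)
      with he | he | he <;> rw [he] <;> simp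
  · -- cc2 = 2
    have hg3le : cc 3 lam ≤ 2 := by omega
    rcases (show cc 3 lam = 1 ∨ cc 3 lam = 2 by omega) with h3 | h3
    · obtain ⟨hL, hsh⟩ := shape h hg1 h2 h3 hg4 (by omega) hL4
      rw [hsum] at hL hsh
      rw [show n - (n - d1 - 1 + 2 + 1) + 3 = d1 + 1 by omega] at hL hsh
      rw [hsh]
      simp only [show (1:ℕ) - 1 = 0 from rfl, show (2:ℕ) - 1 = 1 from rfl, replicate_zero,
        nil_append, replicate_one, show (2:ℕ) - 1 = 1 from rfl]
      rw [show n - d1 - 1 - 2 = n - d1 - 3 by omega]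
      rw [hL] at hLm
      rcases (show d1 + 1 = n - d1 - 1 ∨ d1 + 1 = n - d1 by omega)
        with he | he <;> rw [he] <;> simp
    · obtain ⟨hL, hsh⟩ := shape h hg1 h2 h3 hg4 (by omega) hL4
      rw [hsum] at hL hsh
      rw [show n - (n - d1 - 1 + 2 + 2) + 3 = d1 by omega] at hL hsh
      rw [hsh]
      simp only [show (2:ℕ) - 2 = 0 from rfl, show (2:ℕ) - 1 = 1 from rfl, replicate_zero,
        nil_append, append_nil, replicate_one]
      rw [show n - d1 - 1 - 2 = n - d1 - 3 by omega]
      rw [hL] at hLm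
      simp only [List.mem_cons]
      refine Or.inr (Or.inr (Or.inr (Or.inr (Or.inr (Or.inr (Or.inr (Or.inr (Or.inr
        (Or.inr (Or.inl ?_))))))))))
      congr 1
      omega
  · -- cc2 = 3
    have h3 : cc 3 lam = 1 := by
      by_contra hc
      have hb := sum_ge h hne (show 3 ≤ lam.headD 0 by omega)
      rw [Ioc03] at hb
      omega
    obtain ⟨hL, hsh⟩ := shape h hg1 h2 h3 hg4 (by omega) hL4
    rw [hsum] at hL hsh
    rw [show n - (n - d1 - 1 + 3 + 1) + 3 = d1 by omega] at hL hsh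
    rw [hsh]
    simp only [show (1:ℕ) - 1 = 0 from rfl, show (3:ℕ) - 1 = 2 from rfl, replicate_zero,
      nil_append]
    rw [show n - d1 - 1 - 3 = n - d1 - 4 by omega]
    rw [hL] at hLm
    simp only [List.mem_cons, replicate_succ, replicate_zero]
    refine Or.inr (Or.inr (Or.inr (Or.inr (Or.inr (Or.inr (Or.inr (Or.inr (Or.inr
      (Or.inr (Or.inr (Or.inl ?_)))))))))))
    congr 1
    omega


lemma main (n d1 : ℕ) (hn : 13 ≤ n) (lam : List ℕ)
    (hsort : lam.Pairwise (· ≥ ·)) (hpos : ∀ x ∈ lam, 0 < x) (hsum : lam.sum = n)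
    (hcol : lam.length ≤ lam.headD 0)
    (hd1 : 1 < d1) (hd1m : d1 < n - d1)
    (α : List ℕ)
    (hα : α = removeFirstCorner (removeFirstCorner^[d1 - 1] lam) ∨
          α = removeSecondCorner (removeFirstCorner^[d1 - 1] lam))
    (hαmem : α ∈ [[n - d1], List.replicate (n - d1) 1, [n - d1 - 1, 1],
                  2 :: List.replicate (n - d1 - 2) 1]) :
    lam ∈ [[n], [n - 1, 1], [n - 2, 2], [n - 2, 1, 1],
           (n - d1) :: List.replicate (n - d1 - 1) 1,
           (n - d1 + 1) :: List.replicate (n - d1 - 2) 1,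
           (n - d1) :: List.replicate (n - d1 - 2) 1,
           (n - d1) :: 2 :: List.replicate (n - d1 - 3) 1,
           (n - d1 - 1) :: List.replicate (n - d1 - 2) 1,
           (n - d1 - 1) :: 2 :: List.replicate (n - d1 - 3) 1,
           (n - d1 - 1) :: 3 :: List.replicate (n - d1 - 3) 1,
           (n - d1 - 1) :: 2 :: 2 :: List.replicate (n - d1 - 4) 1] := by
  have hPlam : Pt lam := ⟨hsort, hpos⟩
  have hm7 : 7 ≤ n - d1 := by omega
  have hne : lam ≠ [] := ne_nil_of_sum (by omega)
  have hcol' : cc 1 lam ≤ lam.headD 0 := by rw [cc_one hpos]; exact hcol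
  obtain ⟨hPβ, hsumβ, hTrβ⟩ := iterR hPlam (d1 - 1) (by omega)
  have hβne : removeFirstCorner^[d1-1] lam ≠ [] := ne_nil_of_sum (by omega)
  set β := removeFirstCorner^[d1 - 1] lam with hβdef
  have hsumβ' : β.sum = n - d1 + 1 := by omega
  simp only [List.mem_cons, List.not_mem_nil, or_false, List.mem_singleton] at hαmem
  rcases hα with hα | hα
  · -- first corner case : Tr lam α
    obtain ⟨hPα, hsumα, hTrstep⟩ := step hPβ hβne
    rw [← hα] at hTrstep
    have hTr : Tr lam α := Tr_trans hTrβ hTrstep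
    obtain ⟨hT1, hT2, hT3⟩ := hTr
    rcases hαmem with hc | hc | hc | hc <;> subst hc
    · -- α = [n - d1]
      simp only [List.headD_cons] at hT1 hT2 hT3
      have hcα : ∀ i, 0 < i → i < n - d1 → cc i lam = 1 := by
        intro i hi hilt
        rw [hT2 i hi hilt, cc_cons, cc_nil, if_pos (by omega)]
      have hg1 : cc 1 lam = 1 := hcα 1 (by omega) (by omega)
      have hg2 : cc 2 lam = 1 := hcα 2 (by omega) (by omega)
      have hg3 : cc 3 lam = 1 := hcα 3 (by omega) (by omega)
      have hg4 : cc 4 lam ≤ 1 := by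
        have := cc_mono (show 1 ≤ 4 by omega) lam
        omega
      obtain ⟨hL, hsh⟩ := shape hPlam hg1 hg2 hg3 hg4 (by omega) (by omega)
      rw [hsum] at hsh
      rw [hsh, show n - (1 + 1 + 1) + 3 = n by omega]
      simp
    · -- α = replicate (n - d1) 1
      have hh : (replicate (n - d1) 1).headD 0 = 1 := by
        rw [headD_replicate, if_neg (by omega)]
      rw [hh] at hT3
      have hc1 : cc 1 (replicate (n - d1) 1) = n - d1 := by
        rw [cc_replicate, if_pos (le_refl 1)]
      have hg1 : n - d1 ≤ cc 1 lam := by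
        have := hT3 (by omega)
        omega
      rw [tall hPlam hsum hn hd1 hd1m hcol' hg1]
      simp
    · -- α = [n - d1 - 1, 1]
      simp only [List.headD_cons] at hT1 hT2 hT3
      have hcα : ∀ i, 0 < i → i < n - d1 - 1 →
          cc i lam = (if i ≤ n - d1 - 1 then 1 else 0) + (if i ≤ 1 then 1 else 0) := by
        intro i hi hilt
        rw [hT2 i hi hilt, cc_cons, cc_cons, cc_nil]
        omega
      have hg1 : cc 1 lam = 2 := by
        rw [hcα 1 (by omega) (by omega)]
        split_ifs <;> omega
      have hg2 : cc 2 lam = 1 := by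
        rw [hcα 2 (by omega) (by omega)]
        split_ifs <;> omega
      have hg3 : cc 3 lam = 1 := by
        rw [hcα 3 (by omega) (by omega)]
        split_ifs <;> omega
      have hg4 : cc 4 lam ≤ 1 := by
        have := cc_mono (show 2 ≤ 4 by omega) lam
        omega
      obtain ⟨hL, hsh⟩ := shape hPlam hg1 hg2 hg3 hg4 (by omega) (by omega)
      rw [hsum] at hsh
      rw [hsh, show n - (2 + 1 + 1) + 3 = n - 1 by omega]
      simp
    · -- α = 2 :: replicate (n - d1 - 2) 1
      simp only [List.headD_cons] at hT1 hT2 hT3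
      have hg1 : cc 1 lam = n - d1 - 1 := by
        rw [hT2 1 (by omega) (by omega), cc_cons, cc_replicate]
        rw [if_pos (by omega), if_pos (le_refl 1)]
        omega
      exact caseA4 hPlam hsum hn hd1 hd1m hcol' hg1
  · -- second corner case
    rcases stepS hPβ hβne with ⟨k, a, hk, hapos, hβeq, hrm⟩ | ⟨b, hb0, hbB, hccb⟩
    · -- constant β = replicate k a, α = replicate (k-1) a
      rw [hrm] at hα
      have hsumrep : β.sum = k * a := by rw [hβeq]; simp [sum_replicate]
      rcases hαmem with hc | hc | hc | hc
      · -- [n-d1] = replicate (k-1) a : k = 2, a = n-d1, sum contradiction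
        exfalso
        have heq : replicate (k-1) a = [n - d1] := by rw [← hα, hc]
        have hlen : k - 1 = 1 := by
          have := congrArg List.length heq
          simpa using this
        have hmem : a = n - d1 := by
          have : a ∈ [n - d1] := by
            rw [← heq]
            exact mem_replicate.mpr ⟨by omega, rfl⟩
          simpa using this
        have hs2 : β.sum = 2 * (n - d1) := by
          rw [hsumrep, show k = 2 by omega, hmem]
        omega
      · -- replicate (n-d1) 1 : a = 1, k = n-d1+1, tall_false
        exfalso
        have heq : replicate (k-1) a = replicate (n - d1) 1 := by rw [← hα, hc]
        have hlen : k - 1 = n - d1 := by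
          have := congrArg List.length heq
          simpa using this
        have hmem : a = 1 := by
          have : a ∈ replicate (n - d1) 1 := by
            rw [← heq]
            exact mem_replicate.mpr ⟨by omega, rfl⟩
          exact eq_of_mem_replicate this
        subst hmem
        have hk1 : k = n - d1 + 1 := by omega
        have hhβ : β.headD 0 = 1 := by
          rw [hβeq, headD_replicate, if_neg (by omega)]
        obtain ⟨hT1, hT2, hT3⟩ := hTrβ
        rw [hhβ] at hT3
        have hccβ1 : cc 1 β = n - d1 + 1 := by
          rw [hβeq, cc_replicate, if_pos (le_refl 1), hk1]
        have := hT3 (by omega)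
        exact tall_false hPlam hsum hn hd1m hcol' (by omega)
      · -- [n-d1-1, 1] : all elements equal, contradiction
        exfalso
        have heq : replicate (k-1) a = [n - d1 - 1, 1] := by rw [← hα, hc]
        have h1 : n - d1 - 1 = a := by
          apply eq_of_mem_replicate (n := k - 1)
          rw [heq]; simp
        have h2 : 1 = a := by
          apply eq_of_mem_replicate (n := k - 1)
          rw [heq]; simp
        omega
      · -- 2 :: replicate (n-d1-2) 1
        exfalso
        have heq : replicate (k-1) a = 2 :: replicate (n - d1 - 2) 1 := by rw [← hα, hc]
        have h1 : (2:ℕ) = a := by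
          apply eq_of_mem_replicate (n := k - 1)
          rw [heq]; simp
        have h2 : (1:ℕ) = a := by
          apply eq_of_mem_replicate (n := k - 1)
          rw [heq]
          simp only [List.mem_cons]
          right
          exact mem_replicate.mpr ⟨by omega, rfl⟩
        omega
    · -- b-branch
      rw [← hα] at hccb
      obtain ⟨hT1, hT2, hT3⟩ := hTrβ
      have hccB1 : 1 ≤ cc (β.headD 0) β := one_le_cc hβne (le_refl _)
      have hccB0 : cc (β.headD 0 + 1) β = 0 := cc_eq_zero hPβ.1 (by omega)
      rcases hαmem with hc | hc | hc | hc <;> subst hc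
      · -- α = [n - d1] : B = n - d1
        have hcα : ∀ i, cc i [n - d1] = if i ≤ n - d1 then 1 else 0 := by
          intro i
          rw [cc_cons, cc_nil]
          omega
        have e1 := hccb (β.headD 0) (by omega)
        have e2 := hccb (β.headD 0 + 1) (by omega)
        rw [hcα] at e1 e2
        rw [if_neg (show ¬ (β.headD 0 = b) by omega)] at e1
        rw [if_neg (show ¬ (β.headD 0 + 1 = b) by omega), hccB0] at e2
        have hBle : β.headD 0 ≤ n - d1 := by
          by_contra hcon
          rw [if_neg (show ¬ (β.headD 0 ≤ n - d1) by omega)] at e1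
          omega
        have hBge : n - d1 ≤ β.headD 0 := by
          by_contra hcon
          rw [if_pos (show β.headD 0 + 1 ≤ n - d1 by omega)] at e2
          omega
        have hB : β.headD 0 = n - d1 := by omega
        rcases (show b = 1 ∨ 2 ≤ b by omega) with hb1 | hb2
        · subst hb1
          have hval : ∀ i, 0 < i → i < n - d1 →
              cc i lam = (if i ≤ n - d1 then 1 else 0) + (if i = 1 then 1 else 0) := by
            intro i hi hilt
            rw [hT2 i hi (by omega), ← hccb i (by omega), hcα]
          have hg1 : cc 1 lam = 2 := by
            rw [hval 1 (by omega) (by omega)]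
            split_ifs <;> omega
          have hg2 : cc 2 lam = 1 := by
            rw [hval 2 (by omega) (by omega)]
            split_ifs <;> omega
          have hg3 : cc 3 lam = 1 := by
            rw [hval 3 (by omega) (by omega)]
            split_ifs <;> omega
          have hg4 : cc 4 lam ≤ 1 := by
            have := cc_mono (show 2 ≤ 4 by omega) lam
            omega
          obtain ⟨hL, hsh⟩ := shape hPlam hg1 hg2 hg3 hg4 (by omega) (by omega)
          rw [hsum] at hsh
          rw [hsh, show n - (2 + 1 + 1) + 3 = n - 1 by omega]
          simp
        · exfalso
          have hγ1 : cc 1 lam = 1 := by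
            rw [hT2 1 (by omega) (by omega), ← hccb 1 (by omega), hcα]
            rw [if_pos (by omega), if_neg (by omega)]
          have hγb : cc b lam = 2 := by
            rw [hT2 b (by omega) (by omega), ← hccb b (by omega), hcα]
            rw [if_pos (by omega), if_pos rfl]
          have := cc_mono (show 1 ≤ b by omega) lam
          omega
      · -- α = replicate (n - d1) 1 : contradiction
        exfalso
        have e1 := hccb (β.headD 0) (by omega)
        rw [cc_replicate, if_neg (by omega), if_neg (by omega)] at e1
        omega
      · -- α = [n - d1 - 1, 1] : B = n - d1 - 1
        have hcα : ∀ i, cc i [n - d1 - 1, 1] =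
            (if i ≤ n - d1 - 1 then 1 else 0) + (if i ≤ 1 then 1 else 0) := by
          intro i
          rw [cc_cons, cc_cons, cc_nil]
          omega
        have e1 := hccb (β.headD 0) (by omega)
        have e2 := hccb (β.headD 0 + 1) (by omega)
        rw [hcα] at e1 e2
        rw [if_neg (show ¬ (β.headD 0 ≤ 1) by omega),
          if_neg (show ¬ (β.headD 0 = b) by omega)] at e1
        rw [if_neg (show ¬ (β.headD 0 + 1 ≤ 1) by omega),
          if_neg (show ¬ (β.headD 0 + 1 = b) by omega), hccB0] at e2
        have hBle : β.headD 0 ≤ n - d1 - 1 := by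
          by_contra hcon
          rw [if_neg (show ¬ (β.headD 0 ≤ n - d1 - 1) by omega)] at e1
          omega
        have hBge : n - d1 - 1 ≤ β.headD 0 := by
          by_contra hcon
          rw [if_pos (show β.headD 0 + 1 ≤ n - d1 - 1 by omega)] at e2
          omega
        have hB : β.headD 0 = n - d1 - 1 := by omega
        rcases (show b = 1 ∨ b = 2 ∨ 3 ≤ b by omega) with hb1 | hb2 | hb3
        · subst hb1
          have hval : ∀ i, 0 < i → i < n - d1 - 1 →
              cc i lam = (if i ≤ n - d1 - 1 then 1 else 0) + (if i ≤ 1 then 1 else 0)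
                + (if i = 1 then 1 else 0) := by
            intro i hi hilt
            rw [hT2 i hi (by omega), ← hccb i (by omega), hcα]
          have hg1 : cc 1 lam = 3 := by
            rw [hval 1 (by omega) (by omega)]
            split_ifs <;> omega
          have hg2 : cc 2 lam = 1 := by
            rw [hval 2 (by omega) (by omega)]
            split_ifs <;> omega
          have hg3 : cc 3 lam = 1 := by
            rw [hval 3 (by omega) (by omega)]
            split_ifs <;> omega
          have hg4 : cc 4 lam ≤ 1 := by
            have := cc_mono (show 2 ≤ 4 by omega) lam
            omega
          obtain ⟨hL, hsh⟩ := shape hPlam hg1 hg2 hg3 hg4 (by omega) (by omega)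
          rw [hsum] at hsh
          rw [hsh, show n - (3 + 1 + 1) + 3 = n - 2 by omega]
          simp [replicate_succ]
        · subst hb2
          have hval : ∀ i, 0 < i → i < n - d1 - 1 →
              cc i lam = (if i ≤ n - d1 - 1 then 1 else 0) + (if i ≤ 1 then 1 else 0)
                + (if i = 2 then 1 else 0) := by
            intro i hi hilt
            rw [hT2 i hi (by omega), ← hccb i (by omega), hcα]
          have hg1 : cc 1 lam = 2 := by
            rw [hval 1 (by omega) (by omega)]
            split_ifs <;> omega
          have hg2 : cc 2 lam = 2 := by
            rw [hval 2 (by omega) (by omega)]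
            split_ifs <;> omega
          have hg3 : cc 3 lam = 1 := by
            rw [hval 3 (by omega) (by omega)]
            split_ifs <;> omega
          have hg4 : cc 4 lam ≤ 1 := by
            have := cc_mono (show 3 ≤ 4 by omega) lam
            omega
          obtain ⟨hL, hsh⟩ := shape hPlam hg1 hg2 hg3 hg4 (by omega) (by omega)
          rw [hsum] at hsh
          rw [hsh, show n - (2 + 2 + 1) + 3 = n - 2 by omega]
          simp
        · exfalso
          have hγ2 : cc 2 lam = 1 := by
            rw [hT2 2 (by omega) (by omega), ← hccb 2 (by omega), hcα]
            rw [if_pos (by omega), if_neg (by omega), if_neg (by omega)]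
          have hγb : cc b lam = 2 := by
            rw [hT2 b (by omega) (by omega), ← hccb b (by omega), hcα]
            rw [if_pos (by omega), if_neg (by omega), if_pos rfl]
          have := cc_mono (show 2 ≤ b by omega) lam
          omega
      · -- α = 2 :: replicate (n - d1 - 2) 1 : B = 2, b = 1
        have hcα : ∀ i, cc i (2 :: replicate (n - d1 - 2) 1) =
            (if i ≤ 2 then 1 else 0) + (if i ≤ 1 then n - d1 - 2 else 0) := by
          intro i
          rw [cc_cons, cc_replicate]
        have e1 := hccb (β.headD 0) (by omega)
        rw [hcα] at e1
        rw [if_neg (show ¬ (β.headD 0 ≤ 1) by omega),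
          if_neg (show ¬ (β.headD 0 = b) by omega)] at e1
        have hB2 : β.headD 0 = 2 := by
          by_contra hcon
          rw [if_neg (show ¬ (β.headD 0 ≤ 2) by omega)] at e1
          omega
        have hb1 : b = 1 := by omega
        subst hb1
        have hg1 : cc 1 lam = n - d1 := by
          rw [hT2 1 (by omega) (by omega), ← hccb 1 (by omega), hcα]
          rw [if_pos (by omega), if_pos (le_refl 1), if_pos rfl]
          omega
        rw [tall hPlam hsum hn hd1 hd1m hcol' (by omega)]
        simp

end StmtAux



theorem stmt3 (n d1 : ℕ) (hn : 13 ≤ n)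
    (μ lam : List ℕ) (hμ : IsPartitionOf n μ) (hlam : IsPartitionOf n lam)
    (hcol : lam.length ≤ lam.headD 0)
    (hd1 : 1 < d1) (hd1m : d1 < n - d1)
    (hmem : d1 ∈ μ) (herase : μ.erase d1 = [n - d1])
    (α : List ℕ)
    (hα : α = removeFirstCorner (removeFirstCorner^[d1 - 1] lam) ∨
          α = removeSecondCorner (removeFirstCorner^[d1 - 1] lam))
    (hαmem : α ∈ [[n - d1], List.replicate (n - d1) 1, [n - d1 - 1, 1],
                  2 :: List.replicate (n - d1 - 2) 1]) :
    lam ∈ [[n], [n - 1, 1], [n - 2, 2], [n - 2, 1, 1],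
           (n - d1) :: List.replicate (n - d1 - 1) 1,
           (n - d1 + 1) :: List.replicate (n - d1 - 2) 1,
           (n - d1) :: List.replicate (n - d1 - 2) 1,
           (n - d1) :: 2 :: List.replicate (n - d1 - 3) 1,
           (n - d1 - 1) :: List.replicate (n - d1 - 2) 1,
           (n - d1 - 1) :: 2 :: List.replicate (n - d1 - 3) 1,
           (n - d1 - 1) :: 3 :: List.replicate (n - d1 - 3) 1,
           (n - d1 - 1) :: 2 :: 2 :: List.replicate (n - d1 - 4) 1] := by
  obtain ⟨hsort, hpos, hsum⟩ := hlam
  exact StmtAux.main n d1 hn lam hsort hpos hsum hcol hd1 hd1m α hα hαmem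
end

section
/- Let T be a skew diagram with m = |T| ≥ 4 boxes such that the Littlewood–Richardson coefficient of T with content (m-1, 1) is nonzero. Then either T is (up to translation) the Young diagram of (m-1,1) or its 180°-rotation, or at least one of the contents (m), (m-2,2), (m-2,1,1) also has nonzero Littlewood–Richardson coefficient for T. -/
open Polynomial

/-- The box `p = (row, column)` (0-indexed) lies in the Young diagram of `l`. -/
def cellOf (l : List ℕ) (p : ℕ × ℕ) : Prop := p.2 < l.getD p.1 0

/-- The box `p` lies in the skew diagram `lam / mu`. -/
def skewCell (lam mu : List ℕ) (p : ℕ × ℕ) : Prop := cellOf lam p ∧ ¬ cellOf mu p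

/-- `q` is read before (or at) `p` in the reverse reading word of a skew tableau:
rows are read top to bottom, each row from right to left. -/
def readBeforeOrAt (p q : ℕ × ℕ) : Prop := q.1 < p.1 ∨ (q.1 = p.1 ∧ p.2 ≤ q.2)

/-- `T` is a Littlewood–Richardson skew tableau of shape `lam / mu` and content `nu`:
a semistandard filling (weakly increasing along rows, strictly increasing down columns,
with `nu.getD (v-1) 0` entries equal to `v`, entries `0` outside the shape) whose reverse
reading word is a lattice word. -/
def IsLRTableau (lam mu nu : List ℕ) (T : ℕ × ℕ → ℕ) : Prop :=
  (∀ p, ¬ skewCell lam mu p → T p = 0) ∧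
  (∀ p, skewCell lam mu p → 1 ≤ T p) ∧
  (∀ i j j', j ≤ j' → skewCell lam mu (i, j) → skewCell lam mu (i, j') →
    T (i, j) ≤ T (i, j')) ∧
  (∀ i i' j, i < i' → skewCell lam mu (i, j) → skewCell lam mu (i', j) →
    T (i, j) < T (i', j)) ∧
  (∀ v : ℕ, Set.ncard {p | skewCell lam mu p ∧ T p = v + 1} = nu.getD v 0) ∧
  (∀ p, skewCell lam mu p → ∀ v : ℕ,
    Set.ncard {q | skewCell lam mu q ∧ readBeforeOrAt p q ∧ T q = v + 2} ≤
    Set.ncard {q | skewCell lam mu q ∧ readBeforeOrAt p q ∧ T q = v + 1})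

/-- The Littlewood–Richardson coefficient `c^λ_{μ,ν}`: the number of
Littlewood–Richardson skew tableaux of shape `lam / mu` and content `nu`. -/
noncomputable def lrCoeff (lam mu nu : List ℕ) : ℕ :=
  Set.ncard {T : ℕ × ℕ → ℕ | IsLRTableau lam mu nu T}

/-- The Young diagram of `l` as a set of boxes in the plane `ℤ × ℤ`. -/
def shapeSetZ (l : List ℕ) : Set (ℤ × ℤ) :=
  {p | ∃ q : ℕ × ℕ, cellOf l q ∧ p = ((q.1 : ℤ), (q.2 : ℤ))}

/-- The skew diagram `lam / mu` as a set of boxes in the plane `ℤ × ℤ`. -/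
def skewSetZ (lam mu : List ℕ) : Set (ℤ × ℤ) :=
  {p | ∃ q : ℕ × ℕ, skewCell lam mu q ∧ p = ((q.1 : ℤ), (q.2 : ℤ))}

/-- `A` is a translate of `B` in the plane. -/
def IsTranslateOf (A B : Set (ℤ × ℤ)) : Prop :=
  ∃ t : ℤ × ℤ, A = (fun p : ℤ × ℤ => (p.1 + t.1, p.2 + t.2)) '' B

/-- The rotation of a plane set by 180 degrees. -/
def rotate180 (B : Set (ℤ × ℤ)) : Set (ℤ × ℤ) :=
  (fun p : ℤ × ℤ => (-p.1, -p.2)) '' B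


section AuxLR
open Classical

lemma aux_getD_anti {l : List ℕ} (hl : l.Pairwise (· ≥ ·)) {i j : ℕ} (hij : i ≤ j) :
    l.getD j 0 ≤ l.getD i 0 := by
  rcases lt_or_ge j l.length with hj | hj
  · rw [List.getD_eq_getElem l 0 hj, List.getD_eq_getElem l 0 (lt_of_le_of_lt hij hj)]
    rcases eq_or_lt_of_le hij with rfl | hlt
    · exact le_refl _
    · exact List.Pairwise.rel_get_of_lt hl hlt
  · rw [List.getD_eq_default l 0 hj]; exact Nat.zero_le _

lemma aux_skew_iff (lam mu : List ℕ) (p : ℕ × ℕ) :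
    skewCell lam mu p ↔ mu.getD p.1 0 ≤ p.2 ∧ p.2 < lam.getD p.1 0 := by
  unfold skewCell cellOf
  omega

lemma aux_skew_finite (lam mu : List ℕ) : {p | skewCell lam mu p}.Finite := by
  apply Set.Finite.subset ((Finset.range lam.length ×ˢ Finset.range lam.sum).finite_toSet)
  intro p hp
  rw [Set.mem_setOf_eq, aux_skew_iff] at hp
  have h2 : p.2 < lam.getD p.1 0 := hp.2
  have h1 : p.1 < lam.length := by
    by_contra h
    rw [List.getD_eq_default _ _ (by omega)] at h2
    omega
  have h3 : lam.getD p.1 0 ≤ lam.sum := by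
    rw [List.getD_eq_getElem _ _ h1]
    exact List.single_le_sum (fun x _ => Nat.zero_le x) _ (lam.getElem_mem h1)
  simp only [Finset.coe_product, Set.mem_prod, Finset.mem_coe, Finset.mem_range]
  exact ⟨h1, by omega⟩

lemma aux_lr_finite (lam mu nu : List ℕ) :
    {T : ℕ × ℕ → ℕ | IsLRTableau lam mu nu T}.Finite := by
  classical
  have hS := aux_skew_finite lam mu
  apply Set.Finite.subset
    (Set.finite_range (fun g : ({p // p ∈ hS.toFinset} → Fin (nu.length + 1)) =>
      (fun p : ℕ × ℕ => if h : p ∈ hS.toFinset then (g ⟨p, h⟩ : ℕ) else 0)))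
  rintro T hT
  obtain ⟨hzero, hpos, hrow, hcol, hcont, hlat⟩ := hT
  have hbound : ∀ p : ℕ × ℕ, p ∈ hS.toFinset → T p < nu.length + 1 := by
    intro p hp
    have hps : skewCell lam mu p := (Set.Finite.mem_toFinset hS).1 hp
    by_contra hb
    push_neg at hb
    have h1 : 1 ≤ T p := hpos p hps
    have hmem : p ∈ {q | skewCell lam mu q ∧ T q = (T p - 1) + 1} := ⟨hps, by omega⟩
    have hfin2 : {q | skewCell lam mu q ∧ T q = (T p - 1) + 1}.Finite :=
      hS.subset (fun q hq => hq.1)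
    have hc := hcont (T p - 1)
    rw [List.getD_eq_default _ _ (by omega)] at hc
    have hemp : {q | skewCell lam mu q ∧ T q = (T p - 1) + 1} = ∅ :=
      (Set.ncard_eq_zero hfin2).1 hc
    rw [hemp] at hmem
    exact hmem
  refine ⟨fun q => ⟨T q.1, hbound q.1 q.2⟩, ?_⟩
  funext p
  show (if h : p ∈ hS.toFinset then _ else 0) = T p
  by_cases hp : p ∈ hS.toFinset
  · rw [dif_pos hp]
  · rw [dif_neg hp]
    exact (hzero p (fun hs => hp ((Set.Finite.mem_toFinset hS).2 hs))).symm

lemma aux_lr_ne (lam mu nu : List ℕ) (h : ∃ T, IsLRTableau lam mu nu T) :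
    lrCoeff lam mu nu ≠ 0 := by
  unfold lrCoeff
  exact ((Set.ncard_pos (aux_lr_finite lam mu nu)).2 h).ne'

lemma aux_ncard_le_one {A : Set (ℕ × ℕ)} (x : ℕ × ℕ) (h : A ⊆ {x}) : A.ncard ≤ 1 :=
  le_trans (Set.ncard_le_ncard h (Set.finite_singleton x)) (by simp)

lemma aux_ncard_le_two {A : Set (ℕ × ℕ)} (x y : ℕ × ℕ) (h : A ⊆ {x, y}) : A.ncard ≤ 2 := by
  refine le_trans (Set.ncard_le_ncard h ((Set.finite_singleton y).insert x)) ?_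
  exact le_trans (Set.ncard_insert_le x {y}) (by simp)

lemma aux_one_le_ncard {A : Set (ℕ × ℕ)} (hA : A.Finite) (x : ℕ × ℕ) (h : x ∈ A) :
    1 ≤ A.ncard := by
  have := Set.ncard_le_ncard (Set.singleton_subset_iff.2 h) hA
  simpa using this

lemma aux_two_le_ncard {A : Set (ℕ × ℕ)} (hA : A.Finite) (x y : ℕ × ℕ) (hxy : x ≠ y)
    (hx : x ∈ A) (hy : y ∈ A) : 2 ≤ A.ncard := by
  have hsub : ({x, y} : Set (ℕ × ℕ)) ⊆ A := by
    intro q hq; rcases hq with rfl | hq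
    · exact hx
    · rw [Set.mem_singleton_iff] at hq; subst hq; exact hy
  have := Set.ncard_le_ncard hsub hA
  rwa [Set.ncard_pair hxy] at this

end AuxLR


section BuildLR
open Classical in
/-- The filling with value `k` at `y`, `2` at `x`, `1` on other skew cells, `0` outside. -/
noncomputable def auxVal (lam mu : List ℕ) (x y : ℕ × ℕ) (k : ℕ) (p : ℕ × ℕ) : ℕ :=
  if p = y then k else if p = x then 2 else if skewCell lam mu p then 1 else 0

lemma auxVal_x {lam mu : List ℕ} {x y : ℕ × ℕ} {k : ℕ} (hxy : x ≠ y) :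
    auxVal lam mu x y k x = 2 := by
  unfold auxVal
  rw [if_neg hxy, if_pos rfl]

lemma auxVal_y {lam mu : List ℕ} {x y : ℕ × ℕ} {k : ℕ} :
    auxVal lam mu x y k y = k := by
  unfold auxVal
  rw [if_pos rfl]

lemma auxVal_one {lam mu : List ℕ} {x y p : ℕ × ℕ} {k : ℕ} (hp : skewCell lam mu p)
    (hpx : p ≠ x) (hpy : p ≠ y) : auxVal lam mu x y k p = 1 := by
  unfold auxVal
  rw [if_neg hpy, if_neg hpx, if_pos hp]

lemma auxVal_le_k {lam mu : List ℕ} {x y p : ℕ × ℕ} {k : ℕ} (hk : 2 ≤ k) :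
    auxVal lam mu x y k p ≤ k := by
  unfold auxVal
  split_ifs <;> omega

lemma auxVal_pos {lam mu : List ℕ} {x y p : ℕ × ℕ} {k : ℕ} (hk : 1 ≤ k)
    (hp : skewCell lam mu p) : 1 ≤ auxVal lam mu x y k p := by
  unfold auxVal
  split_ifs <;> first | omega | exact absurd hp (by assumption)

lemma aux_row_ncard (i A B : ℕ) :
    {p : ℕ × ℕ | p.1 = i ∧ A ≤ p.2 ∧ p.2 < B}.ncard = B - A := by
  have he : {p : ℕ × ℕ | p.1 = i ∧ A ≤ p.2 ∧ p.2 < B} = (fun j => (i, j)) '' (Set.Ico A B) := by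
    ext q
    constructor
    · rintro ⟨h1, h2, h3⟩
      exact ⟨q.2, ⟨h2, h3⟩, by rw [← h1]⟩
    · rintro ⟨j, hj, rfl⟩
      exact ⟨rfl, hj.1, hj.2⟩
  rw [he, Set.ncard_image_of_injective _ (fun a b h => by simpa using h),
    ← Finset.coe_Ico, Set.ncard_coe_finset, Nat.card_Ico]

lemma buildRow (lam mu : List ℕ) (m : ℕ)
    (hcard : {p | skewCell lam mu p}.ncard = m)
    (hnocol : ∀ i i' j, i < i' → skewCell lam mu (i, j) → skewCell lam mu (i', j) → False) :
    lrCoeff lam mu [m] ≠ 0 := by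
  classical
  apply aux_lr_ne
  refine ⟨fun p => if skewCell lam mu p then 1 else 0, ?_, ?_, ?_, ?_, ?_, ?_⟩
  · intro p hp; dsimp only; rw [if_neg hp]
  · intro p hp; dsimp only; rw [if_pos hp]
  · intro i j j' _ h1 h2; dsimp only; rw [if_pos h1, if_pos h2]
  · intro i i' j h h1 h2; exact (hnocol i i' j h h1 h2).elim
  · intro v
    dsimp only
    match v with
    | 0 =>
      have he : {p | skewCell lam mu p ∧ (if skewCell lam mu p then 1 else 0) = 0 + 1}
          = {p | skewCell lam mu p} := by
        ext q
        constructor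
        · rintro ⟨hq, _⟩; exact hq
        · intro hq
          have hq' : skewCell lam mu q := hq
          exact ⟨hq', by rw [if_pos hq']⟩
      rw [he, hcard]; simp
    | (v + 1) =>
      have he : {p | skewCell lam mu p ∧ (if skewCell lam mu p then 1 else 0) = (v + 1) + 1}
          = ∅ := by
        ext q
        simp only [Set.mem_setOf_eq, Set.mem_empty_iff_false, iff_false, not_and]
        intro hq
        rw [if_pos hq]; omega
      rw [he, Set.ncard_empty]
      exact (List.getD_eq_default _ _ (by simp only [List.length_cons, List.length_nil]; omega)).symm
  · intro p hp v
    dsimp only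
    have he : {q | skewCell lam mu q ∧ readBeforeOrAt p q ∧
        (if skewCell lam mu q then 1 else 0) = v + 2} = ∅ := by
      ext q
      simp only [Set.mem_setOf_eq, Set.mem_empty_iff_false, iff_false, not_and]
      intro hq _
      rw [if_pos hq]; omega
    rw [he, Set.ncard_empty]
    exact Nat.zero_le _

lemma buildLR (lam mu : List ℕ) (m : ℕ) (hm4 : 4 ≤ m)
    (hcard : {p | skewCell lam mu p}.ncard = m)
    (x y : ℕ × ℕ) (hx : skewCell lam mu x) (hy : skewCell lam mu y) (hxy : x ≠ y)
    (k : ℕ) (nu : List ℕ)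
    (hnu : (k = 2 ∧ nu = [m - 2, 2]) ∨ (k = 3 ∧ nu = [m - 2, 1, 1]))
    (hxmax : ∀ j', x.2 ≤ j' → skewCell lam mu (x.1, j') → (x.1, j') = x)
    (hymax : ∀ j', y.2 ≤ j' → skewCell lam mu (y.1, j') →
      (y.1, j') = y ∨ ((y.1, j') = x ∧ k = 2))
    (hcolH : ∀ i i' j, i < i' → skewCell lam mu (i, j) → skewCell lam mu (i', j) →
      auxVal lam mu x y k (i, j) < auxVal lam mu x y k (i', j))
    (hyx : ∀ p : ℕ × ℕ, readBeforeOrAt p y → readBeforeOrAt p x)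
    (h1 : ∀ p : ℕ × ℕ, skewCell lam mu p → readBeforeOrAt p x →
      ∃ u, skewCell lam mu u ∧ u ≠ x ∧ u ≠ y ∧ readBeforeOrAt p u)
    (h2 : k = 2 → ∀ p : ℕ × ℕ, skewCell lam mu p → readBeforeOrAt p x → readBeforeOrAt p y →
      ∃ u v, skewCell lam mu u ∧ skewCell lam mu v ∧ u ≠ v ∧ u ≠ x ∧ u ≠ y ∧ v ≠ x ∧ v ≠ y ∧
        readBeforeOrAt p u ∧ readBeforeOrAt p v) :
    lrCoeff lam mu nu ≠ 0 := by
  have hSfin := aux_skew_finite lam mu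
  have hk : k = 2 ∨ k = 3 := hnu.imp And.left And.left
  set T := auxVal lam mu x y k with hT
  -- classification of values
  have hval2 : ∀ q : ℕ × ℕ, T q = 2 → q = x ∨ (q = y ∧ k = 2) := by
    intro q hq
    rw [hT] at hq
    unfold auxVal at hq
    by_cases e1 : q = y
    · rw [if_pos e1] at hq; exact Or.inr ⟨e1, hq⟩
    · rw [if_neg e1] at hq
      by_cases e2 : q = x
      · exact Or.inl e2
      · rw [if_neg e2] at hq; split_ifs at hq <;> omega
  have hval3 : ∀ q : ℕ × ℕ, T q = 3 → q = y ∧ k = 3 := by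
    intro q hq
    rw [hT] at hq
    unfold auxVal at hq
    by_cases e1 : q = y
    · rw [if_pos e1] at hq; exact ⟨e1, hq⟩
    · rw [if_neg e1] at hq
      by_cases e2 : q = x
      · rw [if_pos e2] at hq; omega
      · rw [if_neg e2] at hq; split_ifs at hq <;> omega
  have hvalle : ∀ q : ℕ × ℕ, T q ≤ 3 := by
    intro q
    rw [hT]; unfold auxVal
    split_ifs <;> omega
  have hrowH : ∀ i j j', j ≤ j' → skewCell lam mu (i, j) → skewCell lam mu (i, j') →
      T (i, j) ≤ T (i, j') := by
    intro i j j' hjj h1 h2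
    by_cases ey : (i, j) = y
    · have e1 : y.1 = i := by rw [← ey]
      have e2 : y.2 = j := by rw [← ey]
      rcases hymax j' (by rw [e2]; exact hjj) (by rw [e1]; exact h2) with h | ⟨h, hk2⟩
      · have hy' : (i, j') = y := by rw [← e1]; exact h
        rw [ey, hy']
      · have hx' : (i, j') = x := by rw [← e1]; exact h
        rw [ey, hx', hT, auxVal_y, auxVal_x hxy, hk2]
    · by_cases ex : (i, j) = x
      · have e1 : x.1 = i := by rw [← ex]
        have e2 : x.2 = j := by rw [← ex]
        have h' : (x.1, j') = x := hxmax j' (by rw [e2]; exact hjj) (by rw [e1]; exact h2)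
        have hx' : (i, j') = x := by rw [← e1]; exact h'
        rw [ex, hx']
      · have hone : T (i, j) = 1 := by rw [hT]; exact auxVal_one h1 ex ey
        rw [hone, hT]
        exact auxVal_pos (by omega) h2
  apply aux_lr_ne
  refine ⟨T, ?_, ?_, hrowH, hcolH, ?_, ?_⟩
  · intro p hp
    rw [hT]; unfold auxVal
    rw [if_neg (fun h : p = y => hp (by rw [h]; exact hy)),
      if_neg (fun h : p = x => hp (by rw [h]; exact hx)), if_neg hp]
  · intro p hp
    rw [hT]; unfold auxVal
    split_ifs <;> omega
  · -- content
    intro v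
    have hSxy : ({x, y} : Set (ℕ × ℕ)) ⊆ {p | skewCell lam mu p} := by
      intro q hq
      rcases hq with rfl | hq
      · exact hx
      · rw [Set.mem_singleton_iff] at hq; subst hq; exact hy
    match v with
    | 0 =>
      have he : {p | skewCell lam mu p ∧ T p = 0 + 1} = {p | skewCell lam mu p} \ {x, y} := by
        ext q
        constructor
        · rintro ⟨hq, hq1⟩
          refine ⟨hq, fun hmem => ?_⟩
          rw [hT] at hq1
          rcases hmem with rfl | hmem
          · rw [auxVal_x hxy] at hq1; omega
          · rw [Set.mem_singleton_iff] at hmem; subst hmem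
            rw [auxVal_y] at hq1
            have : k = 2 ∨ k = 3 := hk
            omega
        · rintro ⟨hq, hmem⟩
          have hq1 : q ≠ x := fun h => hmem (Or.inl h)
          have hq2 : q ≠ y := fun h => hmem (Or.inr (Set.mem_singleton_iff.2 h))
          exact ⟨hq, by rw [hT]; exact auxVal_one hq hq1 hq2⟩
      rw [he, Set.ncard_diff hSxy, hcard, Set.ncard_pair hxy]
      rcases hnu with ⟨_, rfl⟩ | ⟨_, rfl⟩ <;> simp
    | 1 =>
      rcases hnu with ⟨hk2, rfl⟩ | ⟨hk3, rfl⟩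
      · have he : {p | skewCell lam mu p ∧ T p = 1 + 1} = {x, y} := by
          ext q
          simp only [Set.mem_setOf_eq, Set.mem_insert_iff, Set.mem_singleton_iff]
          constructor
          · rintro ⟨hq, hq1⟩
            rcases hval2 q hq1 with h | ⟨h, _⟩
            · exact Or.inl h
            · exact Or.inr h
          · rintro (rfl | rfl)
            · exact ⟨hx, auxVal_x hxy⟩
            · exact ⟨hy, by rw [hT, auxVal_y, hk2]⟩
        rw [he, Set.ncard_pair hxy]
        simp
      · have he : {p | skewCell lam mu p ∧ T p = 1 + 1} = {x} := by
          ext q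
          simp only [Set.mem_setOf_eq, Set.mem_singleton_iff]
          constructor
          · rintro ⟨hq, hq1⟩
            rcases hval2 q hq1 with h | ⟨_, h⟩
            · exact h
            · omega
          · rintro rfl
            exact ⟨hx, auxVal_x hxy⟩
        rw [he, Set.ncard_singleton]
        simp
    | 2 =>
      rcases hnu with ⟨hk2, rfl⟩ | ⟨hk3, rfl⟩
      · have he : {p | skewCell lam mu p ∧ T p = 2 + 1} = ∅ := by
          ext q
          simp only [Set.mem_setOf_eq, Set.mem_empty_iff_false, iff_false, not_and]
          intro hq hq1
          have := (hval3 q hq1).2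
          omega
        rw [he, Set.ncard_empty]
        simp
      · have he : {p | skewCell lam mu p ∧ T p = 2 + 1} = {y} := by
          ext q
          simp only [Set.mem_setOf_eq, Set.mem_singleton_iff]
          constructor
          · rintro ⟨hq, hq1⟩
            exact (hval3 q hq1).1
          · rintro rfl
            exact ⟨hy, by rw [hT, auxVal_y, hk3]⟩
        rw [he, Set.ncard_singleton]
        simp
    | (v + 3) =>
      have he : {p | skewCell lam mu p ∧ T p = (v + 3) + 1} = ∅ := by
        ext q
        simp only [Set.mem_setOf_eq, Set.mem_empty_iff_false, iff_false, not_and]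
        intro hq hq1
        have := hvalle q
        omega
      rw [he, Set.ncard_empty]
      rcases hnu with ⟨_, rfl⟩ | ⟨_, rfl⟩ <;>
        exact (List.getD_eq_default _ _ (by simp only [List.length_cons, List.length_nil]; omega)).symm
  · -- lattice
    intro p hp v
    have hRfin : ∀ w : ℕ,
        {q | skewCell lam mu q ∧ readBeforeOrAt p q ∧ T q = w}.Finite :=
      fun w => hSfin.subset (fun q hq => hq.1)
    match v with
    | 0 =>
      by_cases hbx : readBeforeOrAt p x
      · by_cases hby : k = 2 ∧ readBeforeOrAt p y
        · obtain ⟨u, w, hu, hw, huw, hux, huy, hwx, hwy, hbu, hbw⟩ :=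
            h2 hby.1 p hp hbx hby.2
          refine le_trans (aux_ncard_le_two x y ?_)
            (aux_two_le_ncard (hRfin 1) u w huw ⟨hu, hbu, auxVal_one hu hux huy⟩
              ⟨hw, hbw, auxVal_one hw hwx hwy⟩)
          rintro q ⟨hq, hbq, hq2⟩
          rcases hval2 q hq2 with h | ⟨h, _⟩
          · exact Or.inl h
          · exact Or.inr h
        · obtain ⟨u, hu, hux, huy, hbu⟩ := h1 p hp hbx
          refine le_trans (aux_ncard_le_one x ?_)
            (aux_one_le_ncard (hRfin 1) u ⟨hu, hbu, auxVal_one hu hux huy⟩)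
          rintro q ⟨hq, hbq, hq2⟩
          rcases hval2 q hq2 with h | ⟨h, hk2⟩
          · exact h
          · exact absurd ⟨hk2, by rwa [h] at hbq⟩ hby
      · have he : {q | skewCell lam mu q ∧ readBeforeOrAt p q ∧ T q = 0 + 2} = ∅ := by
          ext q
          simp only [Set.mem_setOf_eq, Set.mem_empty_iff_false, iff_false, not_and]
          rintro hq hbq hq2
          rcases hval2 q hq2 with rfl | ⟨rfl, _⟩
          · exact hbx hbq
          · exact hbx (hyx p hbq)
        rw [he, Set.ncard_empty]
        exact Nat.zero_le _
    | 1 =>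
      by_cases hby : k = 3 ∧ readBeforeOrAt p y
      · refine le_trans (aux_ncard_le_one y ?_)
          (aux_one_le_ncard (hRfin 2) x ⟨hx, hyx p hby.2, auxVal_x hxy⟩)
        rintro q ⟨hq, hbq, hq2⟩
        exact (hval3 q hq2).1
      · have he : {q | skewCell lam mu q ∧ readBeforeOrAt p q ∧ T q = 1 + 2} = ∅ := by
          ext q
          simp only [Set.mem_setOf_eq, Set.mem_empty_iff_false, iff_false, not_and]
          rintro hq hbq hq2
          obtain ⟨rfl, hk3⟩ := hval3 q hq2
          exact hby ⟨hk3, hbq⟩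
        rw [he, Set.ncard_empty]
        exact Nat.zero_le _
    | (v + 2) =>
      have he : {q | skewCell lam mu q ∧ readBeforeOrAt p q ∧ T q = (v + 2) + 2} = ∅ := by
        ext q
        simp only [Set.mem_setOf_eq, Set.mem_empty_iff_false, iff_false, not_and]
        rintro hq hbq hq2
        have := hvalle q
        omega
      rw [he, Set.ncard_empty]
      exact Nat.zero_le _

end BuildLR

theorem stmt16 (lam mu : List ℕ)
    (hlam : IsPartitionOf lam.sum lam) (hmu : IsPartitionOf mu.sum mu)
    (hsub : ∀ i : ℕ, mu.getD i 0 ≤ lam.getD i 0)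
    (m : ℕ) (hm : m = lam.sum - mu.sum) (hm4 : 4 ≤ m)
    (hlr : lrCoeff lam mu [m - 1, 1] ≠ 0) :
    (IsTranslateOf (skewSetZ lam mu) (shapeSetZ [m - 1, 1]) ∨
     IsTranslateOf (skewSetZ lam mu) (rotate180 (shapeSetZ [m - 1, 1]))) ∨
    (lrCoeff lam mu [m] ≠ 0 ∨ lrCoeff lam mu [m - 2, 2] ≠ 0 ∨
     lrCoeff lam mu [m - 2, 1, 1] ≠ 0) := by
  classical
  obtain ⟨hlam_sorted, hlam_pos, hlam_sum⟩ := hlam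
  obtain ⟨hmu_sorted, hmu_pos, hmu_sum⟩ := hmu
  have hSfin := aux_skew_finite lam mu
  have hLa : ∀ {i j : ℕ}, i ≤ j → lam.getD j 0 ≤ lam.getD i 0 :=
    fun h => aux_getD_anti hlam_sorted h
  have hMa : ∀ {i j : ℕ}, i ≤ j → mu.getD j 0 ≤ mu.getD i 0 :=
    fun h => aux_getD_anti hmu_sorted h
  have hsk : ∀ i j : ℕ, skewCell lam mu (i, j) ↔ mu.getD i 0 ≤ j ∧ j < lam.getD i 0 :=
    fun i j => aux_skew_iff lam mu (i, j)
  have hcontig : ∀ i i' j : ℕ, i < i' → skewCell lam mu (i, j) → skewCell lam mu (i', j) →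
      skewCell lam mu (i + 1, j) := by
    intro i i' j h h1 h2
    simp only [hsk] at h1 h2 ⊢
    have q1 := hMa (show i ≤ i + 1 by omega)
    have q2 := hLa (show i + 1 ≤ i' by omega)
    omega
  have hstair : ∀ i j j' : ℕ, j' < j → skewCell lam mu (i, j') → skewCell lam mu (i + 1, j) →
      skewCell lam mu (i + 1, j') ∧ skewCell lam mu (i, j) := by
    intro i j j' hj h1 h2
    simp only [hsk] at h1 h2 ⊢
    have q1 := hMa (show i ≤ i + 1 by omega)
    have q2 := hLa (show i ≤ i + 1 by omega)
    omega
  have hne : {T | IsLRTableau lam mu [m - 1, 1] T}.Nonempty := by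
    by_contra h
    rw [Set.not_nonempty_iff_eq_empty] at h
    apply hlr
    unfold lrCoeff
    rw [h, Set.ncard_empty]
  obtain ⟨T₀, hT0⟩ := hne
  obtain ⟨h0z, h0pos, h0row, h0col, h0cont, h0lat⟩ := hT0
  have hub : ∀ p : ℕ × ℕ, skewCell lam mu p → T₀ p ≤ 2 := by
    intro p hp
    by_contra hb
    push_neg at hb
    have hmem : p ∈ {q | skewCell lam mu q ∧ T₀ q = (T₀ p - 1) + 1} := ⟨hp, by omega⟩
    have hfin2 : {q | skewCell lam mu q ∧ T₀ q = (T₀ p - 1) + 1}.Finite :=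
      hSfin.subset fun q hq => hq.1
    have hc := h0cont (T₀ p - 1)
    rw [List.getD_eq_default _ _
      (by simp only [List.length_cons, List.length_nil]; omega)] at hc
    rw [(Set.ncard_eq_zero hfin2).1 hc] at hmem
    exact hmem
  obtain ⟨p₂, hp2⟩ : ∃ a, {p | skewCell lam mu p ∧ T₀ p = 1 + 1} = {a} := by
    apply Set.ncard_eq_one.1
    rw [h0cont 1]
    simp
  have hScard : {p | skewCell lam mu p}.ncard = m := by
    have hu : {p | skewCell lam mu p} =
        {p | skewCell lam mu p ∧ T₀ p = 0 + 1} ∪ {p | skewCell lam mu p ∧ T₀ p = 1 + 1} := by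
      ext q
      constructor
      · intro hq
        have l1 := h0pos q hq
        have l2 := hub q hq
        rcases (show T₀ q = 1 ∨ T₀ q = 2 by omega) with h | h
        · exact Or.inl ⟨hq, h⟩
        · exact Or.inr ⟨hq, h⟩
      · rintro (⟨hq, _⟩ | ⟨hq, _⟩) <;> exact hq
    rw [hu, Set.ncard_union_eq (by
        rw [Set.disjoint_left]
        rintro q ⟨_, h1⟩ ⟨_, h2⟩
        omega)
      (hSfin.subset fun q hq => hq.1) (hSfin.subset fun q hq => hq.1), h0cont 0, h0cont 1]
    simp only [List.getD_cons_zero, List.getD_cons_succ]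
    omega
  by_cases hvp : ∃ i j : ℕ, skewCell lam mu (i, j) ∧ skewCell lam mu (i + 1, j)
  swap
  · right; left
    apply buildRow lam mu m hScard
    intro i i' j h h1 h2
    exact hvp ⟨i, j, h1, hcontig i i' j h h1 h2⟩
  obtain ⟨r, c, hrc, hrc1⟩ := hvp
  have hp2rc : p₂ = (r + 1, c) := by
    have hlt := h0col r (r + 1) c (Nat.lt_succ_self r) hrc hrc1
    have l1 := h0pos _ hrc
    have l2 := hub _ hrc1
    have hmem : (r + 1, c) ∈ {p | skewCell lam mu p ∧ T₀ p = 1 + 1} := ⟨hrc1, by omega⟩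
    rw [hp2] at hmem
    exact (Set.mem_singleton_iff.1 hmem).symm
  subst hp2rc
  have hvert : ∀ i j : ℕ, skewCell lam mu (i, j) → skewCell lam mu (i + 1, j) →
      i = r ∧ j = c := by
    intro i j h1 h2
    have hlt := h0col i (i + 1) j (Nat.lt_succ_self i) h1 h2
    have l1 := h0pos _ h1
    have l2 := hub _ h2
    have hmem : (i + 1, j) ∈ {p | skewCell lam mu p ∧ T₀ p = 1 + 1} := ⟨h2, by omega⟩
    rw [hp2, Set.mem_singleton_iff, Prod.mk.injEq] at hmem
    omega
  have hcolpair : ∀ i i' j : ℕ, i < i' → skewCell lam mu (i, j) → skewCell lam mu (i', j) →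
      i = r ∧ i' = r + 1 ∧ j = c := by
    intro i i' j h h1 h2
    have ha := hcontig i i' j h h1 h2
    obtain ⟨e1, e2⟩ := hvert i j h1 ha
    rcases eq_or_lt_of_le (show i + 1 ≤ i' by omega) with he | hlt
    · omega
    · have hb := hcontig (i + 1) i' j hlt ha h2
      have := hvert (i + 1) j ha hb
      omega
  have hrowT : ∀ j : ℕ, skewCell lam mu (r, j) → c ≤ j := by
    intro j h
    by_contra hb
    push_neg at hb
    have hst := hstair r c j hb h hrc1
    have := hvert r j h hst.1
    omega
  have hrowB : ∀ j : ℕ, skewCell lam mu (r + 1, j) → j ≤ c := by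
    intro j h
    by_contra hb
    push_neg at hb
    have hst := hstair r j c hb hrc h
    have := hvert r j hst.2 h
    omega
  by_cases hbelow : ∃ w j : ℕ, r + 1 < w ∧ skewCell lam mu (w, j)
  · right; right; right
    obtain ⟨w, j0, hw, hwj⟩ := hbelow
    have hq2 : skewCell lam mu (w, lam.getD w 0 - 1) := by
      rw [hsk] at hwj ⊢
      omega
    apply buildLR lam mu m hm4 hScard (r + 1, c) (w, lam.getD w 0 - 1) hrc1 hq2
      (by intro h; rw [Prod.mk.injEq] at h; omega) 3 [m - 2, 1, 1] (Or.inr ⟨rfl, rfl⟩)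
    · -- hxmax
      intro j' hj' hcell
      have hj2 : c ≤ j' := hj'
      have hcell' : skewCell lam mu (r + 1, j') := hcell
      have hle := hrowB j' hcell'
      have he : j' = c := le_antisymm hle hj2
      rw [he]
    · -- hymax
      intro j' hj' hcell
      have hj2 : lam.getD w 0 - 1 ≤ j' := hj'
      have hcell' : skewCell lam mu (w, j') := hcell
      rw [hsk] at hcell'
      have he : j' = lam.getD w 0 - 1 := by omega
      rw [he]
      left
      rfl
    · -- hcolH
      intro i i' j h h1 h2
      obtain ⟨e1, e2, e3⟩ := hcolpair i i' j h h1 h2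
      subst e1; subst e2; subst e3
      rw [auxVal_one hrc (by intro h'; rw [Prod.mk.injEq] at h'; omega)
          (by intro h'; rw [Prod.mk.injEq] at h'; omega),
        auxVal_x (by intro h'; rw [Prod.mk.injEq] at h'; omega)]
      omega
    · -- hyx
      intro p hb
      rcases hb with h | ⟨h, h2⟩
      · have h' : w < p.1 := h
        left
        show r + 1 < p.1
        omega
      · have h' : w = p.1 := h
        left
        show r + 1 < p.1
        omega
    · -- h1
      intro p hp hb
      refine ⟨(r, c), hrc, ?_, ?_, ?_⟩
      · intro h'; rw [Prod.mk.injEq] at h'; omega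
      · intro h'; rw [Prod.mk.injEq] at h'; omega
      · have h' : r < p.1 := by
          rcases hb with h | ⟨h, h2⟩
          · have h'' : r + 1 < p.1 := h
            omega
          · have h'' : r + 1 = p.1 := h
            omega
        left
        exact h'
    · -- h2 vacuous
      intro hk
      exact absurd hk (by norm_num)
  by_cases habove : ∃ w j : ℕ, w < r ∧ skewCell lam mu (w, j)
  · obtain ⟨w0, j0, hw0, hwj0⟩ := habove
    have hup : skewCell lam mu (w0, lam.getD w0 0 - 1) := by
      rw [hsk] at hwj0 ⊢
      omega
    by_cases ha2 : skewCell lam mu (r, c + 1)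
    · -- x = (r, L r - 1), y = (r+1, c), k = 2
      right; right; left
      have hclt : c + 1 < lam.getD r 0 := by
        rw [hsk] at ha2
        omega
      have hcx : skewCell lam mu (r, lam.getD r 0 - 1) := by
        rw [hsk] at hrc ⊢
        omega
      apply buildLR lam mu m hm4 hScard (r, lam.getD r 0 - 1) (r + 1, c) hcx hrc1
        (by intro h'; rw [Prod.mk.injEq] at h'; omega) 2 [m - 2, 2] (Or.inl ⟨rfl, rfl⟩)
      · -- hxmax
        intro j' hj' hcell
        have hj2 : lam.getD r 0 - 1 ≤ j' := hj'
        have hcell' : skewCell lam mu (r, j') := hcell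
        rw [hsk] at hcell'
        have he : j' = lam.getD r 0 - 1 := by omega
        rw [he]
      · -- hymax
        intro j' hj' hcell
        have hj2 : c ≤ j' := hj'
        have hcell' : skewCell lam mu (r + 1, j') := hcell
        have he : j' = c := le_antisymm (hrowB j' hcell') hj2
        rw [he]
        left
        rfl
      · -- hcolH
        intro i i' j h h1 h2
        obtain ⟨e1, e2, e3⟩ := hcolpair i i' j h h1 h2
        subst e1; subst e2; subst e3
        rw [auxVal_one hrc (by intro h'; rw [Prod.mk.injEq] at h'; omega)
            (by intro h'; rw [Prod.mk.injEq] at h'; omega),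
          auxVal_y]
        omega
      · -- hyx
        intro p hb
        have h' : r < p.1 := by
          rcases hb with h | ⟨h, h2⟩
          · have h'' : r + 1 < p.1 := h
            omega
          · have h'' : r + 1 = p.1 := h
            omega
        left
        exact h'
      · -- h1
        intro p hp hb
        refine ⟨(w0, lam.getD w0 0 - 1), hup, ?_, ?_, ?_⟩
        · intro h'; rw [Prod.mk.injEq] at h'; omega
        · intro h'; rw [Prod.mk.injEq] at h'; omega
        · have h' : w0 < p.1 := by
            rcases hb with h | ⟨h, h2⟩
            · have h'' : r < p.1 := h
              omega
            · have h'' : r = p.1 := h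
              omega
          left
          exact h'
      · -- h2
        intro _ p hp hbx hby
        have h' : r + 1 ≤ p.1 := by
          rcases hby with h | ⟨h, h2⟩
          · have h'' : r + 1 < p.1 := h
            omega
          · have h'' : r + 1 = p.1 := h
            omega
        refine ⟨(w0, lam.getD w0 0 - 1), (r, c), hup, hrc, ?_, ?_, ?_, ?_, ?_, ?_, ?_⟩
        · intro h''; rw [Prod.mk.injEq] at h''; omega
        · intro h''; rw [Prod.mk.injEq] at h''; omega
        · intro h''; rw [Prod.mk.injEq] at h''; omega
        · intro h''; rw [Prod.mk.injEq] at h''; omega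
        · intro h''; rw [Prod.mk.injEq] at h''; omega
        · left; show w0 < p.1; omega
        · left; show r < p.1; omega
    · by_cases hb2 : 1 ≤ c ∧ skewCell lam mu (r + 1, c - 1)
      · -- x = (r+1, c), y = (r+1, c-1), k = 2
        right; right; left
        apply buildLR lam mu m hm4 hScard (r + 1, c) (r + 1, c - 1) hrc1 hb2.2
          (by intro h'; rw [Prod.mk.injEq] at h'; omega) 2 [m - 2, 2] (Or.inl ⟨rfl, rfl⟩)
        · intro j' hj' hcell
          have hj2 : c ≤ j' := hj'
          have hcell' : skewCell lam mu (r + 1, j') := hcell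
          have he : j' = c := le_antisymm (hrowB j' hcell') hj2
          rw [he]
        · intro j' hj' hcell
          have hj2 : c - 1 ≤ j' := hj'
          have hcell' : skewCell lam mu (r + 1, j') := hcell
          have hle := hrowB j' hcell'
          rcases (show j' = c - 1 ∨ j' = c by omega) with he | he
          · rw [he]; left; rfl
          · rw [he]; right
            exact ⟨rfl, rfl⟩
        · intro i i' j h h1 h2
          obtain ⟨e1, e2, e3⟩ := hcolpair i i' j h h1 h2
          subst e1; subst e2; subst e3
          rw [auxVal_one hrc (by intro h'; rw [Prod.mk.injEq] at h'; omega)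
              (by intro h'; rw [Prod.mk.injEq] at h'; omega),
            auxVal_x (by intro h'; rw [Prod.mk.injEq] at h'; omega)]
          omega
        · intro p hb
          rcases hb with h | ⟨h, h2⟩
          · have h' : r + 1 < p.1 := h
            left
            exact h'
          · have h' : r + 1 = p.1 := h
            have h2' : p.2 ≤ c - 1 := h2
            right
            exact ⟨h', by show p.2 ≤ c; omega⟩
        · intro p hp hb
          have h' : r + 1 ≤ p.1 := by
            rcases hb with h | ⟨h, h2⟩
            · have h'' : r + 1 < p.1 := h
              omega
            · have h'' : r + 1 = p.1 := h
              omega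
          refine ⟨(r, c), hrc, ?_, ?_, ?_⟩
          · intro h''; rw [Prod.mk.injEq] at h''; omega
          · intro h''; rw [Prod.mk.injEq] at h''; omega
          · left; show r < p.1; omega
        · intro _ p hp hbx hby
          have h' : r + 1 ≤ p.1 := by
            rcases hbx with h | ⟨h, h2⟩
            · have h'' : r + 1 < p.1 := h
              omega
            · have h'' : r + 1 = p.1 := h
              omega
          refine ⟨(r, c), (w0, lam.getD w0 0 - 1), hrc, hup, ?_, ?_, ?_, ?_, ?_, ?_, ?_⟩
          · intro h''; rw [Prod.mk.injEq] at h''; omega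
          · intro h''; rw [Prod.mk.injEq] at h''; omega
          · intro h''; rw [Prod.mk.injEq] at h''; omega
          · intro h''; rw [Prod.mk.injEq] at h''; omega
          · intro h''; rw [Prod.mk.injEq] at h''; omega
          · left; show r < p.1; omega
          · left; show w0 < p.1; omega
      · -- a = 1, b = 1 : x = (r, c), y = (r+1, c), k = 3
        right; right; right
        have hrowr : ∀ j : ℕ, skewCell lam mu (r, j) → j = c := by
          intro j h
          have hle := hrowT j h
          rcases eq_or_lt_of_le hle with he | hlt
          · omega
          · exfalso
            apply ha2
            rw [hsk] at h hrc ⊢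
            omega
        have hrowb1 : ∀ j : ℕ, skewCell lam mu (r + 1, j) → j = c := by
          intro j h
          have hle := hrowB j h
          rcases eq_or_lt_of_le hle with he | hlt
          · omega
          · exfalso
            apply hb2
            constructor
            · omega
            · rw [hsk] at h hrc1 ⊢
              omega
        apply buildLR lam mu m hm4 hScard (r, c) (r + 1, c) hrc hrc1
          (by intro h'; rw [Prod.mk.injEq] at h'; omega) 3 [m - 2, 1, 1] (Or.inr ⟨rfl, rfl⟩)
        · intro j' hj' hcell
          have hcell' : skewCell lam mu (r, j') := hcell
          rw [hrowr j' hcell']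
        · intro j' hj' hcell
          have hcell' : skewCell lam mu (r + 1, j') := hcell
          rw [hrowb1 j' hcell']
          left
          rfl
        · intro i i' j h h1 h2
          obtain ⟨e1, e2, e3⟩ := hcolpair i i' j h h1 h2
          subst e1; subst e2; subst e3
          rw [auxVal_x (by intro h'; rw [Prod.mk.injEq] at h'; omega), auxVal_y]
          omega
        · intro p hb
          have h' : r < p.1 := by
            rcases hb with h | ⟨h, h2⟩
            · have h'' : r + 1 < p.1 := h
              omega
            · have h'' : r + 1 = p.1 := h
              omega
          left
          exact h'
        · intro p hp hb
          have h' : r ≤ p.1 := by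
            rcases hb with h | ⟨h, h2⟩
            · have h'' : r < p.1 := h
              omega
            · have h'' : r = p.1 := h
              omega
          refine ⟨(w0, lam.getD w0 0 - 1), hup, ?_, ?_, ?_⟩
          · intro h''; rw [Prod.mk.injEq] at h''; omega
          · intro h''; rw [Prod.mk.injEq] at h''; omega
          · left; show w0 < p.1; omega
        · intro hk
          exact absurd hk (by norm_num)
  · -- no cells outside rows r, r+1
    have hrows : ∀ i j : ℕ, skewCell lam mu (i, j) → i = r ∨ i = r + 1 := by
      intro i j h
      by_contra hcon
      push_neg at hcon
      rcases (show i < r ∨ r + 1 < i by omega) with hlt | hlt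
      · exact habove ⟨i, j, hlt, h⟩
      · exact hbelow ⟨i, j, hlt, h⟩
    have hMrc : mu.getD r 0 ≤ c := ((hsk r c).1 hrc).1
    by_cases ha2 : skewCell lam mu (r, c + 1)
    · by_cases hb2 : 1 ≤ c ∧ skewCell lam mu (r + 1, c - 1)
      · -- x = (r+1, c), y = (r+1, c-1), k = 2
        right; right; left
        apply buildLR lam mu m hm4 hScard (r + 1, c) (r + 1, c - 1) hrc1 hb2.2
          (by intro h'; rw [Prod.mk.injEq] at h'; omega) 2 [m - 2, 2] (Or.inl ⟨rfl, rfl⟩)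
        · intro j' hj' hcell
          have hj2 : c ≤ j' := hj'
          have hcell' : skewCell lam mu (r + 1, j') := hcell
          have he : j' = c := le_antisymm (hrowB j' hcell') hj2
          rw [he]
        · intro j' hj' hcell
          have hj2 : c - 1 ≤ j' := hj'
          have hcell' : skewCell lam mu (r + 1, j') := hcell
          have hle := hrowB j' hcell'
          rcases (show j' = c - 1 ∨ j' = c by omega) with he | he
          · rw [he]; left; rfl
          · rw [he]; right
            exact ⟨rfl, rfl⟩
        · intro i i' j h h1 h2
          obtain ⟨e1, e2, e3⟩ := hcolpair i i' j h h1 h2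
          subst e1; subst e2; subst e3
          rw [auxVal_one hrc (by intro h'; rw [Prod.mk.injEq] at h'; omega)
              (by intro h'; rw [Prod.mk.injEq] at h'; omega),
            auxVal_x (by intro h'; rw [Prod.mk.injEq] at h'; omega)]
          omega
        · intro p hb
          rcases hb with h | ⟨h, h2⟩
          · have h' : r + 1 < p.1 := h
            left
            exact h'
          · have h' : r + 1 = p.1 := h
            have h2' : p.2 ≤ c - 1 := h2
            right
            exact ⟨h', by show p.2 ≤ c; omega⟩
        · intro p hp hb
          have h' : r + 1 ≤ p.1 := by
            rcases hb with h | ⟨h, h2⟩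
            · have h'' : r + 1 < p.1 := h
              omega
            · have h'' : r + 1 = p.1 := h
              omega
          refine ⟨(r, c), hrc, ?_, ?_, ?_⟩
          · intro h''; rw [Prod.mk.injEq] at h''; omega
          · intro h''; rw [Prod.mk.injEq] at h''; omega
          · left; show r < p.1; omega
        · intro _ p hp hbx hby
          have h' : r + 1 ≤ p.1 := by
            rcases hbx with h | ⟨h, h2⟩
            · have h'' : r + 1 < p.1 := h
              omega
            · have h'' : r + 1 = p.1 := h
              omega
          refine ⟨(r, c), (r, c + 1), hrc, ha2, ?_, ?_, ?_, ?_, ?_, ?_, ?_⟩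
          · intro h''; rw [Prod.mk.injEq] at h''; omega
          · intro h''; rw [Prod.mk.injEq] at h''; omega
          · intro h''; rw [Prod.mk.injEq] at h''; omega
          · intro h''; rw [Prod.mk.injEq] at h''; omega
          · intro h''; rw [Prod.mk.injEq] at h''; omega
          · left; show r < p.1; omega
          · left; show r < p.1; omega
      · -- b = 1 : translate of (m-1, 1)
        left; left
        have hrowb1 : ∀ j : ℕ, skewCell lam mu (r + 1, j) → j = c := by
          intro j h
          have hle := hrowB j h
          rcases eq_or_lt_of_le hle with he | hlt
          · omega
          · exfalso
            apply hb2
            constructor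
            · omega
            · rw [hsk] at h hrc1 ⊢
              omega
        have hchar : ∀ i j : ℕ, skewCell lam mu (i, j) ↔
            ((i = r ∧ c ≤ j ∧ j < lam.getD r 0) ∨ (i = r + 1 ∧ j = c)) := by
          intro i j
          constructor
          · intro h
            rcases hrows i j h with e | e
            · have h' : skewCell lam mu (r, j) := by rw [← e]; exact h
              exact Or.inl ⟨e, hrowT j h', ((hsk r j).1 h').2⟩
            · have h' : skewCell lam mu (r + 1, j) := by rw [← e]; exact h
              exact Or.inr ⟨e, hrowb1 j h'⟩
          · rintro (⟨e, h1, h2⟩ | ⟨e, e2⟩)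
            · rw [e, hsk]
              omega
            · rw [e, e2]
              exact hrc1
        have hrowsub : {p : ℕ × ℕ | p.1 = r ∧ c ≤ p.2 ∧ p.2 < lam.getD r 0} ⊆
            {p | skewCell lam mu p} := by
          rintro q ⟨e1, e2, e3⟩
          have := (hchar q.1 q.2).2 (Or.inl ⟨e1, e2, e3⟩)
          rwa [Prod.mk.eta] at this
        have hsplitT : {p : ℕ × ℕ | skewCell lam mu p} =
            {p : ℕ × ℕ | p.1 = r ∧ c ≤ p.2 ∧ p.2 < lam.getD r 0} ∪ {(r + 1, c)} := by
          ext q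
          constructor
          · intro hq
            have hq' := (hchar q.1 q.2).1 (by rw [Prod.mk.eta]; exact hq)
            rcases hq' with ⟨e1, e2, e3⟩ | ⟨e1, e2⟩
            · exact Or.inl ⟨e1, e2, e3⟩
            · right
              rw [Set.mem_singleton_iff]
              exact Prod.ext_iff.2 ⟨e1, e2⟩
          · rintro (⟨e1, e2, e3⟩ | hq)
            · exact hrowsub ⟨e1, e2, e3⟩
            · rw [Set.mem_singleton_iff] at hq
              rw [hq]
              exact hrc1
        have hcount : (lam.getD r 0 - c) + 1 = m := by
          rw [← hScard, hsplitT, Set.ncard_union_eq (by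
              rw [Set.disjoint_left]
              rintro q ⟨e1, e2, e3⟩ hq2
              rw [Set.mem_singleton_iff] at hq2
              rw [hq2] at e1
              have : r + 1 = r := e1
              omega)
            (hSfin.subset hrowsub) (Set.finite_singleton _), aux_row_ncard,
            Set.ncard_singleton]
        have hcr : c < lam.getD r 0 := ((hsk r c).1 hrc).2
        have hLr : lam.getD r 0 = c + (m - 1) := by omega
        refine ⟨((r : ℤ), (c : ℤ)), ?_⟩
        ext z
        constructor
        · rintro ⟨q, hq, rfl⟩
          have hq' := (hchar q.1 q.2).1 (by rw [Prod.mk.eta]; exact hq)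
          rcases hq' with ⟨e1, e2, e3⟩ | ⟨e1, e2⟩
          · refine ⟨((0 : ℤ), ((q.2 - c : ℕ) : ℤ)), ⟨(0, q.2 - c), ?_, rfl⟩, ?_⟩
            · show q.2 - c < [m - 1, 1].getD 0 0
              simp only [List.getD_cons_zero]
              omega
            · show ((0 : ℤ) + (r : ℤ), ((q.2 - c : ℕ) : ℤ) + (c : ℤ)) = _
              rw [Prod.ext_iff]
              constructor
              · show (0 : ℤ) + (r : ℤ) = (q.1 : ℤ)
                omega
              · show ((q.2 - c : ℕ) : ℤ) + (c : ℤ) = (q.2 : ℤ)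
                omega
          · refine ⟨((1 : ℤ), (0 : ℤ)), ⟨(1, 0), ?_, rfl⟩, ?_⟩
            · show (0 : ℕ) < [m - 1, 1].getD 1 0
              simp
            · show ((1 : ℤ) + (r : ℤ), (0 : ℤ) + (c : ℤ)) = _
              rw [Prod.ext_iff]
              constructor
              · show (1 : ℤ) + (r : ℤ) = (q.1 : ℤ)
                omega
              · show (0 : ℤ) + (c : ℤ) = (q.2 : ℤ)
                omega
        · rintro ⟨z', ⟨q', hq', rfl⟩, rfl⟩
          have hq1 : q'.1 = 0 ∨ q'.1 = 1 := by
            by_contra hcon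
            push_neg at hcon
            have hd : [m - 1, 1].getD q'.1 0 = 0 :=
              List.getD_eq_default _ _ (by
                simp only [List.length_cons, List.length_nil]
                omega)
            have := hq'
            unfold cellOf at this
            rw [hd] at this
            omega
          rcases hq1 with e | e
          · have hq2 : q'.2 < m - 1 := by
              have := hq'
              unfold cellOf at this
              rw [e] at this
              simpa using this
            refine ⟨(r, c + q'.2), ?_, ?_⟩
            · have := (hchar r (c + q'.2)).2 (Or.inl ⟨rfl, by omega, by omega⟩)
              exact this
            · show ((q'.1 : ℤ) + (r : ℤ), (q'.2 : ℤ) + (c : ℤ)) = _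
              rw [Prod.ext_iff]
              constructor
              · show (q'.1 : ℤ) + (r : ℤ) = ((r : ℕ) : ℤ)
                omega
              · show (q'.2 : ℤ) + (c : ℤ) = ((c + q'.2 : ℕ) : ℤ)
                omega
          · have hq2 : q'.2 = 0 := by
              have := hq'
              unfold cellOf at this
              rw [e] at this
              simp only [List.getD_cons_succ, List.getD_cons_zero] at this
              omega
            refine ⟨(r + 1, c), hrc1, ?_⟩
            show ((q'.1 : ℤ) + (r : ℤ), (q'.2 : ℤ) + (c : ℤ)) = _
            rw [Prod.ext_iff]
            constructor
            · show (q'.1 : ℤ) + (r : ℤ) = ((r + 1 : ℕ) : ℤ)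
              omega
            · show (q'.2 : ℤ) + (c : ℤ) = ((c : ℕ) : ℤ)
              omega
    · -- a = 1 : rotation of (m-1, 1)
      left; right
      have hrowr : ∀ j : ℕ, skewCell lam mu (r, j) → j = c := by
        intro j h
        have hle := hrowT j h
        rcases eq_or_lt_of_le hle with he | hlt
        · omega
        · exfalso
          apply ha2
          rw [hsk] at h hrc ⊢
          omega
      have hLb : lam.getD (r + 1) 0 = c + 1 := by
        have h1 : c < lam.getD (r + 1) 0 := ((hsk (r + 1) c).1 hrc1).2
        by_contra hcon
        have h2 : skewCell lam mu (r + 1, c + 1) := by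
          rw [hsk]
          have := ((hsk (r + 1) c).1 hrc1).1
          omega
        have := hrowB (c + 1) h2
        omega
      have hMb : mu.getD (r + 1) 0 ≤ c := ((hsk (r + 1) c).1 hrc1).1
      have hchar : ∀ i j : ℕ, skewCell lam mu (i, j) ↔
          ((i = r ∧ j = c) ∨ (i = r + 1 ∧ mu.getD (r + 1) 0 ≤ j ∧ j ≤ c)) := by
        intro i j
        constructor
        · intro h
          rcases hrows i j h with e | e
          · have h' : skewCell lam mu (r, j) := by rw [← e]; exact h
            exact Or.inl ⟨e, hrowr j h'⟩
          · have h' : skewCell lam mu (r + 1, j) := by rw [← e]; exact h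
            exact Or.inr ⟨e, ((hsk (r + 1) j).1 h').1, hrowB j h'⟩
        · rintro (⟨e, e2⟩ | ⟨e, h1, h2⟩)
          · rw [e, e2]
            exact hrc
          · rw [e, hsk]
            omega
      have hrowsub : {p : ℕ × ℕ | p.1 = r + 1 ∧ mu.getD (r + 1) 0 ≤ p.2 ∧ p.2 < c + 1} ⊆
          {p | skewCell lam mu p} := by
        rintro q ⟨e1, e2, e3⟩
        have := (hchar q.1 q.2).2 (Or.inr ⟨e1, e2, by omega⟩)
        rwa [Prod.mk.eta] at this
      have hsplitT : {p : ℕ × ℕ | skewCell lam mu p} =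
          {p : ℕ × ℕ | p.1 = r + 1 ∧ mu.getD (r + 1) 0 ≤ p.2 ∧ p.2 < c + 1} ∪ {(r, c)} := by
        ext q
        constructor
        · intro hq
          have hq' := (hchar q.1 q.2).1 (by rw [Prod.mk.eta]; exact hq)
          rcases hq' with ⟨e1, e2⟩ | ⟨e1, e2, e3⟩
          · right
            rw [Set.mem_singleton_iff]
            exact Prod.ext_iff.2 ⟨e1, e2⟩
          · exact Or.inl ⟨e1, e2, by omega⟩
        · rintro (⟨e1, e2, e3⟩ | hq)
          · exact hrowsub ⟨e1, e2, e3⟩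
          · rw [Set.mem_singleton_iff] at hq
            rw [hq]
            exact hrc
      have hcount : ((c + 1) - mu.getD (r + 1) 0) + 1 = m := by
        rw [← hScard, hsplitT, Set.ncard_union_eq (by
            rw [Set.disjoint_left]
            rintro q ⟨e1, e2, e3⟩ hq2
            rw [Set.mem_singleton_iff] at hq2
            rw [hq2] at e1
            have : r = r + 1 := e1
            omega)
          (hSfin.subset hrowsub) (Set.finite_singleton _), aux_row_ncard,
          Set.ncard_singleton]
      have hMb2 : mu.getD (r + 1) 0 = c + 2 - m := by omega
      refine ⟨(((r : ℤ) + 1), (c : ℤ)), ?_⟩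
      ext z
      constructor
      · rintro ⟨q, hq, rfl⟩
        have hq' := (hchar q.1 q.2).1 (by rw [Prod.mk.eta]; exact hq)
        rcases hq' with ⟨e1, e2⟩ | ⟨e1, e2, e3⟩
        · refine ⟨(-(1 : ℤ), (0 : ℤ)), ⟨((1 : ℤ), (0 : ℤ)), ⟨(1, 0), ?_, rfl⟩, rfl⟩, ?_⟩
          · show (0 : ℕ) < [m - 1, 1].getD 1 0
            simp
          · show (-(1 : ℤ) + ((r : ℤ) + 1), (0 : ℤ) + (c : ℤ)) = _
            rw [Prod.ext_iff]
            constructor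
            · show -(1 : ℤ) + ((r : ℤ) + 1) = (q.1 : ℤ)
              omega
            · show (0 : ℤ) + (c : ℤ) = (q.2 : ℤ)
              omega
        · refine ⟨(-(0 : ℤ), -((c - q.2 : ℕ) : ℤ)),
            ⟨((0 : ℤ), ((c - q.2 : ℕ) : ℤ)), ⟨(0, c - q.2), ?_, rfl⟩, rfl⟩, ?_⟩
          · show c - q.2 < [m - 1, 1].getD 0 0
            simp only [List.getD_cons_zero]
            omega
          · show (-(0 : ℤ) + ((r : ℤ) + 1), -((c - q.2 : ℕ) : ℤ) + (c : ℤ)) = _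
            rw [Prod.ext_iff]
            constructor
            · show -(0 : ℤ) + ((r : ℤ) + 1) = (q.1 : ℤ)
              omega
            · show -((c - q.2 : ℕ) : ℤ) + (c : ℤ) = (q.2 : ℤ)
              omega
      · rintro ⟨z', ⟨z'', ⟨q', hq', rfl⟩, rfl⟩, rfl⟩
        have hq1 : q'.1 = 0 ∨ q'.1 = 1 := by
          by_contra hcon
          push_neg at hcon
          have hd : [m - 1, 1].getD q'.1 0 = 0 :=
            List.getD_eq_default _ _ (by
              simp only [List.length_cons, List.length_nil]
              omega)
          have := hq'
          unfold cellOf at this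
          rw [hd] at this
          omega
        rcases hq1 with e | e
        · have hq2 : q'.2 < m - 1 := by
            have := hq'
            unfold cellOf at this
            rw [e] at this
            simpa using this
          refine ⟨(r + 1, c - q'.2), ?_, ?_⟩
          · exact (hchar (r + 1) (c - q'.2)).2 (Or.inr ⟨rfl, by omega, by omega⟩)
          · show (-(q'.1 : ℤ) + ((r : ℤ) + 1), -(q'.2 : ℤ) + (c : ℤ)) = _
            rw [Prod.ext_iff]
            constructor
            · show -(q'.1 : ℤ) + ((r : ℤ) + 1) = ((r + 1 : ℕ) : ℤ)
              omega
            · show -(q'.2 : ℤ) + (c : ℤ) = ((c - q'.2 : ℕ) : ℤ)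
              omega
        · have hq2 : q'.2 = 0 := by
            have := hq'
            unfold cellOf at this
            rw [e] at this
            simp only [List.getD_cons_succ, List.getD_cons_zero] at this
            omega
          refine ⟨(r, c), hrc, ?_⟩
          show (-(q'.1 : ℤ) + ((r : ℤ) + 1), -(q'.2 : ℤ) + (c : ℤ)) = _
          rw [Prod.ext_iff]
          constructor
          · show -(q'.1 : ℤ) + ((r : ℤ) + 1) = ((r : ℕ) : ℤ)
            omega
          · show -(q'.2 : ℤ) + (c : ℤ) = ((c : ℕ) : ℤ)
            omega
end

section
/- Let σ ∈ S_6 be a 6-cycle and let ρ be the irreducible representation of S_6 corresponding to the partition (3,3). Then the minimal polynomial of ρ(σ) equals (x^6 - 1)/(x^2 + x + 1); that is, the eigenvalues of ρ(σ) are exactly the 6th roots of unity that are not primitive cube roots of unity. -/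
set_option linter.unusedSectionVars false

lemma youngPermChar_card (mu : List ℕ) (hlen : mu.length = 2) (τ : Equiv.Perm (Fin 6)) :
    youngPermChar mu τ = (Fintype.card {f : Fin 6 → Fin 2 // (∀ i, f (τ i) = f i) ∧
      ∀ j : Fin 2, (Finset.univ.filter fun i => f i = j).card = mu.getD (j : ℕ) 0} : ℤ) := by
  rw [youngPermChar]
  congr 1
  rw [← Nat.card_coe_set_eq, ← Nat.card_eq_fintype_card]
  apply Nat.card_congr
  symm
  apply Equiv.ofBijective (f := fun g => (⟨fun i => ((g.1 i : ℕ)), ?_, ?_⟩ :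
    {f : Fin 6 → ℕ | (∀ i, f (τ i) = f i) ∧ ∀ j : ℕ, Set.ncard {i : Fin 6 | f i = j} = mu.getD j 0}))
  · constructor
    · intro g₁ g₂ h
      apply Subtype.ext; funext i
      have := congrFun (congrArg Subtype.val h) i
      exact Fin.val_injective this
    · rintro ⟨f, hf1, hf2⟩
      have hlt : ∀ i, f i < 2 := by
        intro i
        by_contra h
        push_neg at h
        have h0 : mu.getD (f i) 0 = 0 := List.getD_eq_default _ _ (by omega)
        have := hf2 (f i)
        rw [h0] at this
        have hne : ({i' : Fin 6 | f i' = f i} : Set (Fin 6)).Nonempty := ⟨i, rfl⟩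
        rw [Set.ncard_eq_zero (Set.toFinite _)] at this
        exact hne.ne_empty this
      refine ⟨⟨fun i => ⟨f i, hlt i⟩, ?_, ?_⟩, ?_⟩
      · intro i; exact Fin.val_injective (by simpa using hf1 i)
      · intro j
        have := hf2 (j : ℕ)
        rw [show ({i : Fin 6 | f i = (j : ℕ)} : Set (Fin 6)) =
          ((Finset.univ.filter fun i => (⟨f i, hlt i⟩ : Fin 2) = j : Finset (Fin 6)) : Set (Fin 6)) by
            ext i; simp [Fin.ext_iff]] at this
        rw [Set.ncard_coe_finset] at this
        exact this
      · apply Subtype.ext; funext i; rfl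
  · intro i
    exact congrArg Fin.val (g.2.1 i)
  · intro j
    rcases lt_or_ge j 2 with hj | hj
    · have := g.2.2 ⟨j, hj⟩
      rw [show ({i : Fin 6 | (g.1 i : ℕ) = j} : Set (Fin 6)) =
        ((Finset.univ.filter fun i => g.1 i = (⟨j, hj⟩ : Fin 2) : Finset (Fin 6)) : Set (Fin 6)) by
          ext i; simp [Fin.ext_iff]]
      rw [Set.ncard_coe_finset]
      exact this
    · rw [show ({i : Fin 6 | (g.1 i : ℕ) = j} : Set (Fin 6)) = ∅ by
        ext i; simp; omega]
      rw [Set.ncard_empty, List.getD_eq_default _ _ (by omega)]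

lemma chiLambda_33_aux (τ : Equiv.Perm (Fin 6)) :
    (∑ w : Equiv.Perm (Fin 2),
      if ∀ i : Fin 2, (i : ℕ) ≤ ([3,3] : List ℕ).getD i 0 + (w i : ℕ) then
        ((Equiv.Perm.sign w : ℤ)) *
          youngPermChar ((List.finRange 2).map
            (fun (i : Fin 2) => ([3,3] : List ℕ).getD (i : ℕ) 0 + ((w i : ℕ)) - (i : ℕ))) τ
      else 0) = youngPermChar [3,3] τ - youngPermChar [4,2] τ := by
  have huniv : (Finset.univ : Finset (Equiv.Perm (Fin 2))) = {1, Equiv.swap 0 1} := by decide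
  rw [huniv, Finset.sum_insert (by decide), Finset.sum_singleton]
  rw [if_pos (by decide), if_pos (by decide)]
  have h1 : ((List.finRange 2).map
      (fun (i : Fin 2) =>
        ([3,3] : List ℕ).getD (i : ℕ) 0 + (((1 : Equiv.Perm (Fin 2)) i : ℕ)) - (i : ℕ))) = [3,3] := by
    decide
  have h2 : ((List.finRange 2).map
      (fun (i : Fin 2) =>
        ([3,3] : List ℕ).getD (i : ℕ) 0 + (((Equiv.swap (0:Fin 2) 1) i : ℕ)) - (i : ℕ))) = [4,2] := by
    decide
  rw [h1, h2]
  have hs1 : ((Equiv.Perm.sign (1 : Equiv.Perm (Fin 2))) : ℤ) = 1 := by decide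
  have hs2 : ((Equiv.Perm.sign (Equiv.swap (0:Fin 2) 1)) : ℤ) = -1 := by decide
  rw [hs1, hs2]
  ring

lemma chiLambda_33 (τ : Equiv.Perm (Fin 6)) :
    chiLambda [3,3] τ = youngPermChar [3,3] τ - youngPermChar [4,2] τ :=
  chiLambda_33_aux τ

lemma youngPermChar_conj (mu : List ℕ) (g τ : Equiv.Perm (Fin 6)) :
    youngPermChar mu (g * τ * g⁻¹) = youngPermChar mu τ := by
  rw [youngPermChar, youngPermChar]
  congr 1
  have himg : {f : Fin 6 → ℕ | (∀ i, f ((g * τ * g⁻¹) i) = f i) ∧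
        ∀ j : ℕ, Set.ncard {i : Fin 6 | f i = j} = mu.getD j 0} =
      (fun f => f ∘ ⇑g⁻¹) '' {f : Fin 6 → ℕ | (∀ i, f (τ i) = f i) ∧
        ∀ j : ℕ, Set.ncard {i : Fin 6 | f i = j} = mu.getD j 0} := by
    ext f
    constructor
    · rintro ⟨hf1, hf2⟩
      refine ⟨f ∘ ⇑g, ⟨?_, ?_⟩, ?_⟩
      · intro i
        have := hf1 (g i)
        simpa [Equiv.Perm.mul_apply] using this
      · intro j
        have := hf2 j
        rw [← this]
        rw [show {i : Fin 6 | (f ∘ ⇑g) i = j} = ⇑g⁻¹ '' {i : Fin 6 | f i = j} by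
          ext i
          simp only [Set.mem_image, Set.mem_setOf_eq, Function.comp_apply]
          constructor
          · intro h; exact ⟨g i, h, by simp⟩
          · rintro ⟨x, hx, rfl⟩; simpa using hx]
        exact Set.ncard_image_of_injective _ (Equiv.injective _)
      · funext i; simp
    · rintro ⟨f', ⟨hf1, hf2⟩, rfl⟩
      refine ⟨?_, ?_⟩
      · intro i
        simp only [Function.comp_apply, Equiv.Perm.mul_apply]
        simpa using hf1 (g⁻¹ i)
      · intro j
        rw [show {i : Fin 6 | (f' ∘ ⇑g⁻¹) i = j} = ⇑g '' {i : Fin 6 | f' i = j} by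
          ext i
          simp only [Set.mem_image, Set.mem_setOf_eq, Function.comp_apply]
          constructor
          · intro h; exact ⟨g⁻¹ i, h, by simp⟩
          · rintro ⟨x, hx, rfl⟩; simpa using hx]
        rw [Set.ncard_image_of_injective _ (Equiv.injective _)]
        exact hf2 j
  rw [himg, Set.ncard_image_of_injective]
  intro f₁ f₂ h
  funext i
  have := congrFun h (g i)
  simpa using this

lemma chi_vals (σ : Equiv.Perm (Fin 6)) (hσ : σ.cycleType = {6}) (k : ℕ) (hk : k < 6) :
    chiLambda [3,3] (σ ^ k) = ([5, 0, 2, -3, 2, 0] : List ℤ).getD k 0 := by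
  have hc : IsConj (finRotate 6) σ :=
    Equiv.Perm.isConj_iff_cycleType_eq.mpr (by
      rw [cycleType_finRotate_of_le (by norm_num), hσ])
  obtain ⟨g, hg⟩ := isConj_iff.1 hc
  have h : ∀ m : ℕ, σ ^ m = g * (finRotate 6) ^ m * g⁻¹ := by
    intro m
    rw [← hg]
    induction m with
    | zero => simp
    | succ n ih => rw [pow_succ, pow_succ, ih]; group
  rw [h k, chiLambda_33, youngPermChar_conj, youngPermChar_conj,
    youngPermChar_card [3,3] rfl, youngPermChar_card [4,2] rfl]
  interval_cases k <;> decide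

section ProjOp
variable {V : Type} [AddCommGroup V] [Module ℂ V] [FiniteDimensional ℂ V]

noncomputable def projOp (A : Module.End ℂ V) (μ : ℂ) : Module.End ℂ V :=
  (6 : ℂ)⁻¹ • ∑ k ∈ Finset.range 6, μ ^ k • A ^ k

lemma mul_projOp (A : Module.End ℂ V) (hA : A ^ 6 = 1) (μ : ℂ) (hμ : μ ^ 6 = 1) :
    A * projOp A μ = μ ^ 5 • projOp A μ := by
  rw [projOp]
  simp only [Finset.sum_range_succ, Finset.sum_range_zero, zero_add]
  rw [mul_smul_comm]
  rw [mul_add, mul_add, mul_add, mul_add, mul_add]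
  simp only [mul_smul_comm, ← pow_succ']
  rw [show A ^ 6 = 1 from hA]
  simp only [pow_zero, one_smul, smul_smul]
  match_scalars <;> first
    | ring1
    | linear_combination (-(6:ℂ)⁻¹) * hμ
    | linear_combination (-(6:ℂ)⁻¹ * μ) * hμ
    | linear_combination (-(6:ℂ)⁻¹ * μ^2) * hμ
    | linear_combination (-(6:ℂ)⁻¹ * μ^3) * hμ
    | linear_combination (-(6:ℂ)⁻¹ * μ^4) * hμ
    | linear_combination (-(6:ℂ)⁻¹ * μ^5) * hμ
    | linear_combination ((6:ℂ)⁻¹ * μ^5) * hμ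

lemma pow_mul_projOp (A : Module.End ℂ V) (hA : A ^ 6 = 1) (μ : ℂ) (hμ : μ ^ 6 = 1) (k : ℕ) :
    A ^ k * projOp A μ = (μ ^ 5) ^ k • projOp A μ := by
  induction k with
  | zero => simp
  | succ n ih =>
    rw [pow_succ', mul_assoc, ih, mul_smul_comm, mul_projOp A hA μ hμ, smul_smul, pow_succ']
    ring_nf

lemma projOp_idem (A : Module.End ℂ V) (hA : A ^ 6 = 1) (μ : ℂ) (hμ : μ ^ 6 = 1) :
    projOp A μ * projOp A μ = projOp A μ := by
  nth_rewrite 1 [projOp]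
  rw [smul_mul_assoc, Finset.sum_mul]
  have hterm : ∀ k ∈ Finset.range 6, (μ ^ k • A ^ k) * projOp A μ = projOp A μ := by
    intro k _
    rw [smul_mul_assoc, pow_mul_projOp A hA μ hμ, smul_smul, ← pow_mul]
    rw [show μ ^ k * μ ^ (5 * k) = μ ^ (6 * k) by rw [← pow_add]; ring_nf]
    rw [show μ ^ (6 * k) = 1 by rw [pow_mul, hμ, one_pow], one_smul]
  rw [Finset.sum_congr rfl hterm, Finset.sum_const, Finset.card_range,
    ← Nat.cast_smul_eq_nsmul ℂ, smul_smul]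
  norm_num

lemma trace_projOp (A : Module.End ℂ V) (μ : ℂ) :
    LinearMap.trace ℂ V (projOp A μ) =
      (6 : ℂ)⁻¹ * ∑ k ∈ Finset.range 6, μ ^ k * LinearMap.trace ℂ V (A ^ k) := by
  rw [projOp, map_smul, map_sum]
  simp only [map_smul]
  rw [Finset.mul_sum]
  simp [smul_eq_mul, Finset.mul_sum]

lemma hasEigen_of_projOp_ne (A : Module.End ℂ V) (hA : A ^ 6 = 1) (μ : ℂ) (hμ : μ ^ 6 = 1)
    (h : projOp A μ ≠ 0) : Module.End.HasEigenvalue A (μ ^ 5) := by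
  have : ∃ x : V, projOp A μ x ≠ 0 := by
    by_contra hc
    push_neg at hc
    exact h (LinearMap.ext fun x => by simpa using hc x)
  obtain ⟨x, hx⟩ := this
  apply Module.End.hasEigenvalue_of_hasEigenvector (x := projOp A μ x)
  refine ⟨Module.End.mem_eigenspace_iff.mpr ?_, hx⟩
  have := congrFun (congrArg DFunLike.coe (mul_projOp A hA μ hμ)) x
  simpa [Module.End.mul_apply] using this

lemma projOp_ne_of_hasEigen (A : Module.End ℂ V) (μ : ℂ) (hμ : μ ^ 6 = 1)
    (h : Module.End.HasEigenvalue A (μ ^ 5)) : projOp A μ ≠ 0 := by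
  obtain ⟨v, hv⟩ := h.exists_hasEigenvector
  have hv0 := hv.2
  have happ : projOp A μ v = v := by
    rw [projOp]
    simp only [LinearMap.smul_apply, LinearMap.sum_apply]
    have hterm : ∀ k ∈ Finset.range 6, μ ^ k • (A ^ k) v = v := by
      intro k _
      rw [hv.pow_apply, smul_smul, ← mul_pow,
        show μ * μ ^ 5 = 1 by linear_combination hμ, one_pow, one_smul]
    rw [Finset.sum_congr rfl hterm, Finset.sum_const, Finset.card_range,
      ← Nat.cast_smul_eq_nsmul ℂ, smul_smul]
    norm_num
  intro h0
  rw [h0] at happ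
  exact hv0 (by simpa using happ.symm)

lemma projOp_eq_zero_of_trace (A : Module.End ℂ V) (hA : A ^ 6 = 1) (μ : ℂ) (hμ : μ ^ 6 = 1)
    (htr : LinearMap.trace ℂ V (projOp A μ) = 0) : projOp A μ = 0 := by
  have hid : projOp A μ ∘ₗ projOp A μ = projOp A μ := by
    rw [← Module.End.mul_eq_comp]
    exact projOp_idem A hA μ hμ
  obtain ⟨p, hp⟩ := (LinearMap.isProj_iff_isIdempotentElem _).mpr hid
  have : (Module.finrank ℂ p : ℂ) = 0 := by rw [← hp.trace, htr]
  have hfr : Module.finrank ℂ p = 0 := by exact_mod_cast this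
  have hbot : p = ⊥ := Submodule.finrank_eq_zero.mp hfr
  apply LinearMap.ext
  intro x
  have := hp.map_mem x
  rw [hbot] at this
  simpa using this

lemma sum_projOp (A : Module.End ℂ V) {ζ : ℂ} (hζ : IsPrimitiveRoot ζ 6) :
    ∑ j ∈ Finset.range 6, projOp A (ζ ^ j) = 1 := by
  simp only [projOp]
  rw [← Finset.smul_sum, Finset.sum_comm]
  have hin : ∀ k ∈ Finset.range 6,
      (∑ j ∈ Finset.range 6, (ζ ^ j) ^ k • A ^ k) = (if k = 0 then (6:ℂ) else 0) • A ^ k := by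
    intro k hk
    rw [← Finset.sum_smul]
    congr 1
    have : ∀ j, (ζ ^ j) ^ k = (ζ ^ k) ^ j := by
      intro j; rw [← pow_mul, ← pow_mul, mul_comm]
    simp only [this]
    rcases eq_or_ne k 0 with rfl | hk0
    · simp
    · rw [if_neg hk0]
      have hne : ζ ^ k ≠ 1 := by
        apply hζ.pow_ne_one_of_pos_of_lt hk0
        simpa using Finset.mem_range.mp hk
      have hgeom := geom_sum_mul (ζ ^ k) 6
      have hpow : (ζ ^ k) ^ 6 = 1 := by
        rw [← pow_mul, mul_comm, pow_mul, hζ.pow_eq_one, one_pow]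
      rw [hpow, sub_self] at hgeom
      rcases mul_eq_zero.mp hgeom with h | h
      · exact h
      · exact absurd (sub_eq_zero.mp h) hne
  rw [Finset.sum_congr rfl hin]
  simp only [ite_smul, zero_smul]
  rw [Finset.sum_ite_eq' (Finset.range 6) 0]
  norm_num [smul_smul]

end ProjOp

open Polynomial

theorem stmt18 (σ : Equiv.Perm (Fin 6)) (hσ : σ.cycleType = {6})
    (V : Type) [AddCommGroup V] [Module ℂ V] [FiniteDimensional ℂ V]
    (ρ : Representation ℂ (Equiv.Perm (Fin 6)) V)
    (hρ : ∀ τ, LinearMap.trace ℂ V (ρ τ) = (chiLambda [3, 3] τ : ℂ)) :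
    minpoly ℂ (ρ σ : Module.End ℂ V) * (Polynomial.X ^ 2 + Polynomial.X + 1) =
      Polynomial.X ^ 6 - 1 ∧
    (∀ η : ℂ, Module.End.HasEigenvalue (ρ σ : Module.End ℂ V) η ↔
      (η ^ 6 = 1 ∧ η ^ 2 + η + 1 ≠ 0)) := by
  set A : Module.End ℂ V := ρ σ with hAdef
  -- σ has order 6
  have hσ6 : σ ^ 6 = 1 := by
    have hl := Equiv.Perm.lcm_cycleType σ
    rw [hσ] at hl
    simp only [Multiset.lcm_singleton, normalize_eq] at hl
    exact orderOf_dvd_iff_pow_eq_one.mp (by rw [← hl])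
  have hA : A ^ 6 = 1 := by rw [hAdef, ← map_pow, hσ6, map_one]
  -- primitive sixth root of unity
  have hζp : IsPrimitiveRoot (Complex.exp (2 * Real.pi * Complex.I / 6)) 6 :=
    Complex.isPrimitiveRoot_exp 6 (by norm_num)
  set ζ : ℂ := Complex.exp (2 * Real.pi * Complex.I / 6) with hζdef
  have hz6 : ζ ^ 6 = 1 := hζp.pow_eq_one
  have hzne1 : ζ ≠ 1 := hζp.ne_one (by norm_num)
  have hz2ne : ζ ^ 2 ≠ 1 := hζp.pow_ne_one_of_pos_of_lt (by norm_num) (by norm_num)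
  have hz3 : ζ ^ 3 = -1 := by
    have h2 : (ζ ^ 3 - 1) * (ζ ^ 3 + 1) = 0 := by
      have : (ζ ^ 3) ^ 2 = 1 := by rw [← pow_mul]; exact hz6
      linear_combination this
    rcases mul_eq_zero.mp h2 with h | h
    · exact absurd (sub_eq_zero.mp h)
        (hζp.pow_ne_one_of_pos_of_lt (by norm_num) (by norm_num))
    · linear_combination h
  have hz : ζ ^ 2 = ζ - 1 := by
    have h : (ζ + 1) * (ζ ^ 2 - ζ + 1) = 0 := by linear_combination hz3
    rcases mul_eq_zero.mp h with h | h
    · exfalso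
      apply hz2ne
      rw [show ζ = -1 by linear_combination h]
      ring
    · linear_combination h
  have hzne0 : ζ ≠ 0 := by
    intro h; rw [h] at hz; norm_num at hz
  have h5 : ζ ^ 5 = 1 - ζ := by linear_combination (ζ^3 + ζ^2 - 1) * hz
  have hzp6 : ∀ m : ℕ, (ζ ^ m) ^ 6 = 1 := by
    intro m; rw [← pow_mul, mul_comm, pow_mul, hz6, one_pow]
  -- traces of powers of A
  have htr : ∀ k : ℕ, k < 6 →
      LinearMap.trace ℂ V (A ^ k) = ((([5, 0, 2, -3, 2, 0] : List ℤ).getD k 0 : ℤ) : ℂ) := by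
    intro k hk
    rw [hAdef, ← map_pow, hρ, chi_vals σ hσ k hk]
  have htrQ : ∀ μ : ℂ, LinearMap.trace ℂ V (projOp A μ) =
      (6 : ℂ)⁻¹ * (5 + 2 * μ ^ 2 - 3 * μ ^ 3 + 2 * μ ^ 4) := by
    intro μ
    rw [trace_projOp]
    congr 1
    rw [Finset.sum_range_succ, Finset.sum_range_succ, Finset.sum_range_succ,
      Finset.sum_range_succ, Finset.sum_range_succ, Finset.sum_range_succ,
      Finset.sum_range_zero]
    rw [htr 0 (by norm_num), htr 1 (by norm_num), htr 2 (by norm_num),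
      htr 3 (by norm_num), htr 4 (by norm_num), htr 5 (by norm_num)]
    simp only [List.getD_cons_zero, List.getD_cons_succ]
    push_cast
    ring
  -- the six projections' traces
  have hT0 : LinearMap.trace ℂ V (projOp A (ζ ^ 0)) = 1 := by
    rw [htrQ]; norm_num
  have hT1 : LinearMap.trace ℂ V (projOp A (ζ ^ 1)) = 1 := by
    rw [htrQ]
    linear_combination ((1:ℂ)/3*ζ^2 - 1/6*ζ - 1/6) * hz
  have hT2 : LinearMap.trace ℂ V (projOp A (ζ ^ 2)) = 0 := by
    rw [htrQ]
    linear_combination ((1:ℂ)/3*ζ^6 + 1/3*ζ^5 - 1/2*ζ^4 - 5/6*ζ^3 + 5/6*ζ + 5/6) * hz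
  have hT3 : LinearMap.trace ℂ V (projOp A (ζ ^ 3)) = 2 := by
    rw [htrQ]
    linear_combination ((1:ℂ)/3*ζ^10 + 1/3*ζ^9 - 5/6*ζ^7 - 5/6*ζ^6 + 7/6*ζ^4 + 7/6*ζ^3 - 7/6*ζ - 7/6) * hz
  have hT4 : LinearMap.trace ℂ V (projOp A (ζ ^ 4)) = 0 := by
    rw [htrQ]
    linear_combination ((1:ℂ)/3*ζ^14 + 1/3*ζ^13 - 1/3*ζ^11 - 5/6*ζ^10 - 1/2*ζ^9 + 1/3*ζ^8
      + 5/6*ζ^7 + 5/6*ζ^6 - 5/6*ζ^4 - 5/6*ζ^3 + 5/6*ζ + 5/6) * hz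
  have hT5 : LinearMap.trace ℂ V (projOp A (ζ ^ 5)) = 1 := by
    rw [htrQ]
    linear_combination ((1:ℂ)/3*ζ^18 + 1/3*ζ^17 - 1/3*ζ^15 - 1/3*ζ^14 - 1/2*ζ^13 - 1/6*ζ^12
      + 1/3*ζ^11 + 1/2*ζ^10 + 1/6*ζ^9 - 1/6*ζ^7 - 1/6*ζ^6 + 1/6*ζ^4 + 1/6*ζ^3 - 1/6*ζ - 1/6) * hz
  -- vanishing projections
  have hP2 : projOp A (ζ ^ 2) = 0 := projOp_eq_zero_of_trace A hA _ (hzp6 2) hT2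
  have hP4 : projOp A (ζ ^ 4) = 0 := projOp_eq_zero_of_trace A hA _ (hzp6 4) hT4
  -- nonvanishing projections give eigenvalues
  have hNE : ∀ m : ℕ, LinearMap.trace ℂ V (projOp A (ζ ^ m)) ≠ 0 → projOp A (ζ ^ m) ≠ 0 := by
    intro m h hc
    rw [hc] at h
    simp at h
  have hE1 : Module.End.HasEigenvalue A 1 := by
    have := hasEigen_of_projOp_ne A hA (ζ ^ 0) (hzp6 0) (hNE 0 (by rw [hT0]; norm_num))
    rwa [show ((ζ^0:ℂ))^5 = 1 by norm_num] at this
  have hEz : Module.End.HasEigenvalue A ζ := by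
    have := hasEigen_of_projOp_ne A hA (ζ ^ 5) (hzp6 5) (hNE 5 (by rw [hT5]; norm_num))
    rwa [show ((ζ^5:ℂ))^5 = ζ by
      have h25 : (ζ^5:ℂ)^5 = (ζ^6)^4 * ζ := by ring
      rw [h25, hz6]; ring] at this
  have hEm1 : Module.End.HasEigenvalue A (-1) := by
    have := hasEigen_of_projOp_ne A hA (ζ ^ 3) (hzp6 3) (hNE 3 (by rw [hT3]; norm_num))
    rwa [show ((ζ^3:ℂ))^5 = -1 by rw [hz3]; norm_num] at this
  have hEz5 : Module.End.HasEigenvalue A (ζ ^ 5) := by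
    have := hasEigen_of_projOp_ne A hA (ζ ^ 1) (hzp6 1) (hNE 1 (by rw [hT1]; norm_num))
    rwa [show ((ζ^1:ℂ))^5 = ζ^5 by ring] at this
  -- the candidate minimal polynomial
  set q : ℂ[X] := (X - C 1) * (X - C (-1)) * (X - C ζ) * (X - C (ζ ^ 5)) with hqdef
  have hmulQ : ∀ μ : ℂ, μ ^ 6 = 1 → ∀ c : ℂ,
      (A - c • 1) * projOp A μ = (μ ^ 5 - c) • projOp A μ := by
    intro μ hμ c
    rw [sub_mul, mul_projOp A hA μ hμ, smul_mul_assoc, one_mul, sub_smul]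
  have hBQ : ∀ μ : ℂ, μ ^ 6 = 1 →
      (A - (1:ℂ) • 1) * (A - (-1:ℂ) • 1) * (A - ζ • 1) * (A - ζ ^ 5 • 1) * projOp A μ =
        ((μ ^ 5 - 1) * (μ ^ 5 - (-1)) * (μ ^ 5 - ζ) * (μ ^ 5 - ζ ^ 5)) • projOp A μ := by
    intro μ hμ
    rw [mul_assoc _ _ (projOp A μ), hmulQ μ hμ (ζ ^ 5), mul_smul_comm,
      mul_assoc _ _ (projOp A μ), hmulQ μ hμ ζ, mul_smul_comm,
      mul_assoc _ _ (projOp A μ), hmulQ μ hμ (-1), mul_smul_comm,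
      hmulQ μ hμ 1, smul_smul, smul_smul, smul_smul]
    congr 1
    ring
  have hB0 : (A - (1:ℂ) • 1) * (A - (-1:ℂ) • 1) * (A - ζ • 1) * (A - ζ ^ 5 • 1) = 0 := by
    have h1 : (A - (1:ℂ) • 1) * (A - (-1:ℂ) • 1) * (A - ζ • 1) * (A - ζ ^ 5 • 1) =
        (A - (1:ℂ) • 1) * (A - (-1:ℂ) • 1) * (A - ζ • 1) * (A - ζ ^ 5 • 1) *
          ∑ j ∈ Finset.range 6, projOp A (ζ ^ j) := by
      rw [sum_projOp A hζp, mul_one]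
    rw [h1, Finset.mul_sum]
    apply Finset.sum_eq_zero
    intro j hj
    rw [Finset.mem_range] at hj
    interval_cases j
    · rw [hBQ _ (hzp6 0)]
      rw [show (((ζ:ℂ)^0)^5 - 1) * ((ζ^0)^5 - (-1)) * ((ζ^0)^5 - ζ) * ((ζ^0)^5 - ζ^5) = 0 by norm_num]
      rw [zero_smul]
    · rw [hBQ _ (hzp6 1)]
      rw [show (((ζ:ℂ)^1)^5 - 1) * ((ζ^1)^5 - (-1)) * ((ζ^1)^5 - ζ) * ((ζ^1)^5 - ζ^5) = 0 by ring]
      rw [zero_smul]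
    · rw [hBQ _ (hzp6 2), hP2, smul_zero]
    · rw [hBQ _ (hzp6 3)]
      rw [show (((ζ:ℂ)^3)^5 - 1) * ((ζ^3)^5 - (-1)) * ((ζ^3)^5 - ζ) * ((ζ^3)^5 - ζ^5) = 0 by
        rw [show ((ζ:ℂ)^3)^5 = (ζ^3)*((ζ^3)^2)^2 by ring]
        rw [hz3]; ring_nf]
      rw [zero_smul]
    · rw [hBQ _ (hzp6 4), hP4, smul_zero]
    · rw [hBQ _ (hzp6 5)]
      rw [show (((ζ:ℂ)^5)^5 - 1) * ((ζ^5)^5 - (-1)) * ((ζ^5)^5 - ζ) * ((ζ^5)^5 - ζ^5) = 0 by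
        rw [show ((ζ:ℂ)^5)^5 = (ζ^6)^4 * ζ by ring, hz6]; ring_nf]
      rw [zero_smul]
  have haq : aeval A q = 0 := by
    rw [hqdef]
    simp only [map_mul, map_sub, aeval_X, aeval_C, Module.algebraMap_end_eq_smul_id]
    exact hB0
  have hint : IsIntegral ℂ A := Algebra.IsIntegral.isIntegral (R := ℂ) A
  have hdvd : minpoly ℂ A ∣ q := minpoly.dvd ℂ A haq
  have hqmonic : q.Monic := by
    rw [hqdef]
    exact (((monic_X_sub_C 1).mul (monic_X_sub_C (-1))).mul (monic_X_sub_C ζ)).mul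
      (monic_X_sub_C (ζ ^ 5))
  have hqdeg : q.natDegree = 4 := by
    rw [hqdef]
    compute_degree!
  -- distinctness
  have hζnem1 : ζ ≠ -1 := by
    intro h; rw [h] at hz; norm_num at hz
  have hd1 : ζ ^ 5 ≠ 1 := hζp.pow_ne_one_of_pos_of_lt (by norm_num) (by norm_num)
  have hd2 : ζ ^ 5 ≠ -1 := by
    intro h
    rw [h5] at h
    have : ζ = 2 := by linear_combination -h
    rw [this] at hz; norm_num at hz
  have hd3 : ζ ^ 5 ≠ ζ := by
    intro h
    rw [h5] at h
    have : ζ = 1/2 := by linear_combination -h/2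
    rw [this] at hz; norm_num at hz
  -- degree of minpoly at least 4
  have hminne : minpoly ℂ A ≠ 0 := minpoly.ne_zero hint
  have hroot1 : (minpoly ℂ A).IsRoot 1 := Module.End.hasEigenvalue_iff_isRoot.mp hE1
  have hrootm1 : (minpoly ℂ A).IsRoot (-1) := Module.End.hasEigenvalue_iff_isRoot.mp hEm1
  have hrootz : (minpoly ℂ A).IsRoot ζ := Module.End.hasEigenvalue_iff_isRoot.mp hEz
  have hrootz5 : (minpoly ℂ A).IsRoot (ζ ^ 5) := Module.End.hasEigenvalue_iff_isRoot.mp hEz5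
  have hsub : ({1, -1, ζ, ζ ^ 5} : Finset ℂ) ⊆ (minpoly ℂ A).roots.toFinset := by
    intro x hx
    simp only [Finset.mem_insert, Finset.mem_singleton] at hx
    rw [Multiset.mem_toFinset, mem_roots hminne]
    rcases hx with rfl | rfl | rfl | rfl
    exacts [hroot1, hrootm1, hrootz, hrootz5]
  have hcard : ({1, -1, ζ, ζ ^ 5} : Finset ℂ).card = 4 := by
    rw [Finset.card_insert_of_notMem (by
        simp only [Finset.mem_insert, Finset.mem_singleton]
        push_neg
        exact ⟨by norm_num, fun h => hzne1 h.symm, fun h => hd1 h.symm⟩),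
      Finset.card_insert_of_notMem (by
        simp only [Finset.mem_insert, Finset.mem_singleton]
        push_neg
        exact ⟨fun h => hζnem1 h.symm, fun h => hd2 h.symm⟩),
      Finset.card_insert_of_notMem (by
        simp only [Finset.mem_singleton]
        exact fun h => hd3 h.symm),
      Finset.card_singleton]
  have hdeg4 : 4 ≤ (minpoly ℂ A).natDegree := by
    calc (4:ℕ) = ({1, -1, ζ, ζ ^ 5} : Finset ℂ).card := hcard.symm
    _ ≤ (minpoly ℂ A).roots.toFinset.card := Finset.card_le_card hsub
    _ ≤ Multiset.card (minpoly ℂ A).roots := Multiset.toFinset_card_le _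
    _ ≤ (minpoly ℂ A).natDegree := card_roots' _
  have hq_eq : q = minpoly ℂ A :=
    eq_of_monic_of_dvd_of_natDegree_le (minpoly.monic hint) hqmonic hdvd (hqdeg ▸ hdeg4)
  -- the polynomial identity
  have hzC : (C ζ) ^ 2 = C ζ - 1 := by
    rw [← map_pow, hz, map_sub, map_one]
  have hqid : q * (X ^ 2 + X + 1) = X ^ 6 - 1 := by
    rw [hqdef]
    simp only [map_pow, map_neg, map_one]
    linear_combination ((-1 : ℂ[X])*X^5*(C ζ)^3 - X^5*(C ζ)^2 + X^5 + X^4*(C ζ)^4 - X^4*(C ζ)^2 - X^4*(C ζ)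
      + X^3*(C ζ)^4 + X^3*(C ζ)^3 - X^3*(C ζ) - X^3 + X^2*(C ζ)^3 + X^2*(C ζ)^2 - X^2
      - X*(C ζ)^4 + X*(C ζ)^2 + X*(C ζ) - (C ζ)^4 - (C ζ)^3 + (C ζ) + 1) * hzC
  constructor
  · rw [← hq_eq]; exact hqid
  · intro η
    have hevalid : eval η q * (η ^ 2 + η + 1) = η ^ 6 - 1 := by
      have := congrArg (eval η) hqid
      simpa using this
    rw [Module.End.hasEigenvalue_iff_isRoot, ← hq_eq]
    constructor
    · intro h
      have heval : eval η q = 0 := h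
      constructor
      · have : η ^ 6 - 1 = 0 := by rw [← hevalid, heval, zero_mul]
        linear_combination this
      · intro h0
        have hfac : (η - 1) * (η - (-1)) * (η - ζ) * (η - ζ ^ 5) = 0 := by
          have := heval
          simp only [hqdef, eval_mul, eval_sub, eval_X, eval_C] at this
          exact this
        rcases mul_eq_zero.mp hfac with hf | hf
        rotate_left
        · -- η = ζ^5
          have hη : η = ζ ^ 5 := sub_eq_zero.mp hf
          rw [hη, h5] at h0
          have : ζ = 1 := by linear_combination (hz - h0)/2
          exact hzne1 this
        rcases mul_eq_zero.mp hf with hf | hf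
        rotate_left
        · -- η = ζ
          have hη : η = ζ := sub_eq_zero.mp hf
          rw [hη] at h0
          have : ζ = 0 := by linear_combination (h0 - hz)/2
          exact hzne0 this
        rcases mul_eq_zero.mp hf with hf | hf
        · have hη : η = 1 := sub_eq_zero.mp hf
          rw [hη] at h0; norm_num at h0
        · have hη : η = -1 := sub_eq_zero.mp hf
          rw [hη] at h0; norm_num at h0
    · rintro ⟨h6, hne⟩
      have : eval η q * (η ^ 2 + η + 1) = 0 := by rw [hevalid, h6]; ring
      rcases mul_eq_zero.mp this with h | h
      · exact h
      · exact absurd h hne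
end
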